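/- arXiv:1711.07179 — 6 statements merged into one kernel-verified Lean document; each statement's English description precedes it below -/
import Mathlib

section
/- For every integer q ≥ 7, the sequences a_k = q^{-k} and b_k = 2^{q^k} satisfy: for all m ≥ 2, the partial sum ∑_{k=1}^{m-1} a_k b_k ≤ (1/(q-1)) · a_m b_m. -/
open Finset

lemma key_nat (q n : ℕ) (hq : 7 ≤ q) (hn : 1 ≤ n) :
    q ^ 2 * 2 ^ (q ^ n) ≤ 2 ^ (q ^ (n + 1)) := by
  have h1 : q < 2 ^ q := Nat.lt_two_pow_self (n := q)
  have h2 : q ^ 2 ≤ 2 ^ (2 * q) := by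
    calc q ^ 2 ≤ (2 ^ q) ^ 2 := Nat.pow_le_pow_left h1.le 2
      _ = 2 ^ (2 * q) := by rw [← pow_mul, mul_comm]
  have hqn : q ≤ q ^ n := Nat.le_self_pow (by omega) q
  have h3 : 2 * q + q ^ n ≤ q ^ (n + 1) := by
    have h4 : q ^ (n + 1) = q * q ^ n := by ring
    nlinarith
  calc q ^ 2 * 2 ^ (q ^ n) ≤ 2 ^ (2 * q) * 2 ^ (q ^ n) :=
        Nat.mul_le_mul_right _ h2
    _ = 2 ^ (2 * q + q ^ n) := (pow_add 2 _ _).symm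
    _ ≤ 2 ^ (q ^ (n + 1)) := Nat.pow_le_pow_right (by norm_num) h3

lemma key_real (q n : ℕ) (hq : 7 ≤ q) (hn : 1 ≤ n) :
    (q : ℝ) ^ 2 * 2 ^ (q ^ n) ≤ 2 ^ (q ^ (n + 1)) := by
  exact_mod_cast key_nat q n hq hn

/-- For every integer `q ≥ 7`, with `a k = q⁻ᵏ` and `b k = 2^(q^k)`, for all `m ≥ 2`,
`∑_{k=1}^{m-1} a k * b k ≤ (1/(q-1)) * a m * b m`. -/
theorem stmt0 (q : ℕ) (hq : 7 ≤ q) (m : ℕ) (hm : 2 ≤ m) :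
    ∑ k ∈ Finset.Icc 1 (m - 1), ((q : ℝ) ^ k)⁻¹ * (2 : ℝ) ^ (q ^ k)
      ≤ (1 / ((q : ℝ) - 1)) * (((q : ℝ) ^ m)⁻¹ * (2 : ℝ) ^ (q ^ m)) := by
  have hq7 : (7 : ℝ) ≤ (q : ℝ) := by exact_mod_cast hq
  have hx0 : (0 : ℝ) < (q : ℝ) := by linarith
  have hx1 : (0 : ℝ) < (q : ℝ) - 1 := by linarith
  have hxne : (q : ℝ) ≠ 0 := ne_of_gt hx0
  have hx1ne : (q : ℝ) - 1 ≠ 0 := ne_of_gt hx1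
  induction m, hm using Nat.le_induction with
  | base =>
      simp only [show 2 - 1 = 1 from rfl, Finset.Icc_self, Finset.sum_singleton,
        pow_one]
      have hkey : (q : ℝ) ^ 2 * 2 ^ q ≤ 2 ^ (q ^ 2) := by
        simpa using key_real q 1 hq le_rfl
      rw [div_mul_eq_mul_div, le_div_iff₀ hx1, one_mul,
        le_inv_mul_iff₀ (pow_pos hx0 2)]
      have hq1 : (q : ℝ)⁻¹ * ((q : ℝ) - 1) ≤ 1 := by
        rw [inv_mul_le_iff₀ hx0, mul_one]; linarith
      calc (q : ℝ) ^ 2 * ((q : ℝ)⁻¹ * 2 ^ q * ((q : ℝ) - 1))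
          = ((q : ℝ) ^ 2 * 2 ^ q) * ((q : ℝ)⁻¹ * ((q : ℝ) - 1)) := by ring
        _ ≤ 2 ^ (q ^ 2) * 1 := by
            apply mul_le_mul hkey hq1 (by positivity) (by positivity)
        _ = 2 ^ (q ^ 2) := mul_one _
  | succ n hn ih =>
      obtain ⟨p, rfl⟩ : ∃ p, n = p + 1 := ⟨n - 1, by omega⟩
      rw [show p + 1 + 1 - 1 = p + 1 from rfl,
        Finset.sum_Icc_succ_top (by omega : 1 ≤ p + 1)]
      have hA : (0 : ℝ) < ((q : ℝ) ^ (p + 1))⁻¹ * 2 ^ (q ^ (p + 1)) := by positivity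
      have hkey := key_real q (p + 1) hq (by omega)
      have hstep : (q : ℝ) * (((q : ℝ) ^ (p + 1))⁻¹ * 2 ^ (q ^ (p + 1)))
          ≤ ((q : ℝ) ^ (p + 2))⁻¹ * 2 ^ (q ^ (p + 2)) := by
        rw [le_inv_mul_iff₀ (pow_pos hx0 (p + 2))]
        have heq : (q : ℝ) ^ (p + 2) * ((q : ℝ) * (((q : ℝ) ^ (p + 1))⁻¹ * 2 ^ (q ^ (p + 1))))
            = (q : ℝ) ^ 2 * 2 ^ (q ^ (p + 1)) := by
          field_simp
          ring
        rw [heq]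
        exact hkey
      calc ∑ k ∈ Finset.Icc 1 ((p + 1) - 1), ((q : ℝ) ^ k)⁻¹ * (2 : ℝ) ^ (q ^ k)
            + ((q : ℝ) ^ (p + 1))⁻¹ * 2 ^ (q ^ (p + 1))
          ≤ (1 / ((q : ℝ) - 1)) * (((q : ℝ) ^ (p + 1))⁻¹ * 2 ^ (q ^ (p + 1)))
            + ((q : ℝ) ^ (p + 1))⁻¹ * 2 ^ (q ^ (p + 1)) := add_le_add_left ih _
        _ = (1 / ((q : ℝ) - 1)) * ((q : ℝ) * (((q : ℝ) ^ (p + 1))⁻¹ * 2 ^ (q ^ (p + 1)))) := by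
            field_simp
            ring
        _ ≤ (1 / ((q : ℝ) - 1)) * (((q : ℝ) ^ (p + 2))⁻¹ * 2 ^ (q ^ (p + 2))) := by
            apply mul_le_mul_of_nonneg_left hstep (by positivity)
end

section
/- The constant γ := (1/5) · min_{z ∈ [0,2π]} ∫_1^2 |sin(z+t) − sin(z)| t^{−2} dt is strictly positive. -/
open Real Set

/-- For any `z`, there is `t ∈ [1,2]` with `sin (z+t) ≠ sin z`. -/
lemma exists_sin_ne (z : ℝ) : ∃ t ∈ Set.Icc (1:ℝ) 2, Real.sin (z + t) ≠ Real.sin z := by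
  by_contra h
  push_neg at h
  have h1 : Real.sin (z + 1) = Real.sin z := h 1 (by norm_num)
  have h2 : Real.sin (z + 2) = Real.sin z := h 2 (by norm_num)
  have h3 : Real.sin (z + 3/2) = Real.sin z := h (3/2) (by norm_num)
  -- From sin(z+2) = sin(z+1): cos(z+3/2) = 0
  have e1 : Real.sin (z + 2) - Real.sin (z + 1) = 0 := by rw [h1, h2]; ring
  have e2 : Real.sin (z + 3/2) - Real.sin (z + 1) = 0 := by rw [h1, h3]; ring
  rw [Real.sin_sub_sin] at e1 e2
  have hs1 : Real.sin (((z + 2) - (z + 1)) / 2) ≠ 0 := by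
    have : ((z + 2) - (z + 1)) / 2 = 1/2 := by ring
    rw [this]
    exact ne_of_gt (Real.sin_pos_of_pos_of_lt_pi (by norm_num)
      (by linarith [Real.pi_gt_three]))
  have hs2 : Real.sin (((z + 3/2) - (z + 1)) / 2) ≠ 0 := by
    have : ((z + 3/2) - (z + 1)) / 2 = 1/4 := by ring
    rw [this]
    exact ne_of_gt (Real.sin_pos_of_pos_of_lt_pi (by norm_num)
      (by linarith [Real.pi_gt_three]))
  have c1 : Real.cos (((z + 2) + (z + 1)) / 2) = 0 := by
    rcases mul_eq_zero.1 e1 with h' | h'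
    · rcases mul_eq_zero.1 h' with h'' | h''
      · norm_num at h''
      · exact absurd h'' hs1
    · exact h'
  have c2 : Real.cos (((z + 3/2) + (z + 1)) / 2) = 0 := by
    rcases mul_eq_zero.1 e2 with h' | h'
    · rcases mul_eq_zero.1 h' with h'' | h''
      · norm_num at h''
      · exact absurd h'' hs2
    · exact h'
  rw [Real.cos_eq_zero_iff] at c1 c2
  obtain ⟨k, hk⟩ := c1
  obtain ⟨m, hm⟩ := c2
  -- (z+3/2) - (z+5/4) = 1/4 = (k-m)π
  have hdiff : (1/4 : ℝ) = (k - m : ℤ) * π := by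
    have : ((z + 2) + (z + 1)) / 2 - ((z + 3/2) + (z + 1)) / 2 = 1/4 := by ring
    push_cast
    push_cast at hk hm
    nlinarith [this, hk, hm]
  have hπ := Real.pi_gt_three
  rcases lt_trichotomy (k - m : ℤ) 0 with hn | hn | hn
  · have : ((k - m : ℤ) : ℝ) ≤ -1 := by exact_mod_cast (by omega : (k - m : ℤ) ≤ -1)
    nlinarith
  · rw [hn] at hdiff; norm_num at hdiff
  · have : (1 : ℝ) ≤ ((k - m : ℤ) : ℝ) := by exact_mod_cast hn
    nlinarith

lemma integral_pos_each (z : ℝ) :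
    0 < ∫ t in (1:ℝ)..2, |Real.sin (z + t) - Real.sin z| / t ^ 2 := by
  apply intervalIntegral.integral_pos (by norm_num)
  · apply ContinuousOn.div
    · fun_prop
    · fun_prop
    · intro t ht
      have : (1:ℝ) ≤ t := ht.1
      positivity
  · intro t ht
    have : (1:ℝ) < t := ht.1
    positivity
  · obtain ⟨t, ht, hne⟩ := exists_sin_ne z
    refine ⟨t, ht, ?_⟩
    have h1 : (1:ℝ) ≤ t := ht.1
    have : |Real.sin (z + t) - Real.sin z| > 0 := abs_pos.2 (sub_ne_zero.2 hne)
    positivity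

lemma F_continuous : Continuous (fun z : ℝ =>
    ∫ t in (1:ℝ)..2, |Real.sin (z + t) - Real.sin z| * ((max t 1) ^ 2)⁻¹) := by
  apply intervalIntegral.continuous_parametric_intervalIntegral_of_continuous'
  apply Continuous.mul
  · fun_prop
  · apply Continuous.inv₀
    · fun_prop
    · intro p
      have : (1:ℝ) ≤ max p.2 1 := le_max_right _ _
      positivity

lemma F_eq (z : ℝ) :
    (∫ t in (1:ℝ)..2, |Real.sin (z + t) - Real.sin z| * ((max t 1) ^ 2)⁻¹)
      = ∫ t in (1:ℝ)..2, |Real.sin (z + t) - Real.sin z| / t ^ 2 := by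
  apply intervalIntegral.integral_congr
  intro t ht
  rw [Set.uIcc_of_le (by norm_num : (1:ℝ) ≤ 2)] at ht
  have h1 : (1:ℝ) ≤ t := ht.1
  simp only [max_eq_left h1, div_eq_mul_inv]

/-- The constant `γ = (1/5) · min_{z ∈ [0,2π]} ∫_1^2 |sin(z+t) − sin z| t⁻² dt`
is strictly positive. -/
theorem stmt4 :
    0 < (1 / 5 : ℝ) * sInf ((fun z : ℝ =>
      ∫ t in (1:ℝ)..2, |Real.sin (z + t) - Real.sin z| / t ^ 2) '' Set.Icc 0 (2 * π)) := by
  have hfun : (fun z : ℝ => ∫ t in (1:ℝ)..2, |Real.sin (z + t) - Real.sin z| / t ^ 2)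
      = fun z : ℝ => ∫ t in (1:ℝ)..2, |Real.sin (z + t) - Real.sin z| * ((max t 1) ^ 2)⁻¹ := by
    funext z; rw [F_eq]
  have hK : IsCompact ((fun z : ℝ =>
      ∫ t in (1:ℝ)..2, |Real.sin (z + t) - Real.sin z| / t ^ 2) '' Set.Icc 0 (2 * π)) := by
    rw [hfun]
    exact isCompact_Icc.image F_continuous
  have hne : ((fun z : ℝ =>
      ∫ t in (1:ℝ)..2, |Real.sin (z + t) - Real.sin z| / t ^ 2) '' Set.Icc 0 (2 * π)).Nonempty := by
    apply Set.Nonempty.image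
    exact Set.nonempty_Icc.2 (by positivity)
  obtain ⟨z₀, _, hz₀⟩ := hK.sInf_mem hne
  rw [← hz₀]
  have := integral_pos_each z₀
  linarith
end

section
/- Let f be a continuous 2π-periodic function such that for every x ∈ [0, 2π], ε ∈ (0,1) and p ≥ 1, ∫_0^{2π} |f(y) − f(x)|^p |y − x|^{−(1+pε)} dy = +∞. Let a, b : [0,2π] → ℝ be measurable functions with finite Gagliardo seminorms |a|_{ε,p} and |b|_{ε,p} and with a bounded (or a ∈ L^p), satisfying b(x) = a(x) f(x) for a.e. x. Then a = 0 and b = 0 almost everywhere. -/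
open Real MeasureTheory Set

lemma aux_rpow_add (p u v : ℝ) (hp : 1 ≤ p) (hu : 0 ≤ u) (hv : 0 ≤ v) :
    (u + v) ^ p ≤ 2 ^ p * u ^ p + 2 ^ p * v ^ p := by
  have hp0 : 0 ≤ p := le_trans zero_le_one hp
  have h1 : u + v ≤ 2 * max u v := by
    rcases le_total u v with h | h
    · rw [max_eq_right h]; linarith
    · rw [max_eq_left h]; linarith
  have hm : 0 ≤ max u v := le_max_of_le_left hu
  calc (u + v) ^ p ≤ (2 * max u v) ^ p := Real.rpow_le_rpow (by linarith) h1 hp0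
    _ = 2 ^ p * (max u v) ^ p := Real.mul_rpow (by norm_num) hm
    _ ≤ 2 ^ p * (u ^ p + v ^ p) := by
        have h2 : (max u v) ^ p ≤ u ^ p + v ^ p := by
          rcases le_total u v with h | h
          · rw [max_eq_right h]
            have := Real.rpow_nonneg hu p
            linarith
          · rw [max_eq_left h]
            have := Real.rpow_nonneg hv p
            linarith
        have : (0:ℝ) ≤ 2 ^ p := Real.rpow_nonneg (by norm_num) p
        nlinarith
    _ = 2 ^ p * u ^ p + 2 ^ p * v ^ p := by ring

/-- Separation property: if `f` is continuous, `2π`-periodic, and for every `x ∈ [0,2π]`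
the integral `∫_0^{2π} |f y − f x|^p |y−x|^{−(1+pε)} dy` is infinite, and if `a, b` are
measurable with `a ∈ L^p` and finite Gagliardo `W^{ε,p}` seminorms on `(0,2π)`, and
`b = a f` a.e., then `a = 0` and `b = 0` a.e. on `(0,2π)`. -/
theorem stmt9 (p ε : ℝ) (hp : 1 ≤ p) (hε : 0 < ε) (hε1 : ε < 1)
    (f a b : ℝ → ℝ)
    (hfc : Continuous f) (hfper : ∀ x, f (x + 2 * π) = f x)
    (hdiv : ∀ x ∈ Set.Icc (0:ℝ) (2 * π),
      ∫⁻ y in Set.Ioo (0:ℝ) (2 * π),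
        ENNReal.ofReal (|f y - f x| ^ p / |y - x| ^ (1 + p * ε)) = ⊤)
    (ha : Measurable a) (hb : Measurable b)
    (haLp : ∫⁻ x in Set.Ioo (0:ℝ) (2 * π), ENNReal.ofReal (|a x| ^ p) < ⊤)
    (haG : ∫⁻ x in Set.Ioo (0:ℝ) (2 * π), ∫⁻ y in Set.Ioo (0:ℝ) (2 * π),
        ENNReal.ofReal (|a y - a x| ^ p / |y - x| ^ (1 + p * ε)) < ⊤)
    (hbG : ∫⁻ x in Set.Ioo (0:ℝ) (2 * π), ∫⁻ y in Set.Ioo (0:ℝ) (2 * π),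
        ENNReal.ofReal (|b y - b x| ^ p / |y - x| ^ (1 + p * ε)) < ⊤)
    (hab : ∀ᵐ x ∂(volume.restrict (Set.Ioo (0:ℝ) (2 * π))), b x = a x * f x) :
    (∀ᵐ x ∂(volume.restrict (Set.Ioo (0:ℝ) (2 * π))), a x = 0) ∧
    (∀ᵐ x ∂(volume.restrict (Set.Ioo (0:ℝ) (2 * π))), b x = 0) := by
  obtain ⟨C, hC⟩ : ∃ C, ∀ y ∈ Icc (0:ℝ) (2 * π), |f y| ≤ C := by
    obtain ⟨C, hC⟩ := isCompact_Icc.exists_bound_of_continuousOn hfc.continuousOn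
    exact ⟨C, fun y hy => hC y hy⟩
  have hπ : (0:ℝ) < 2 * π := by positivity
  have hC0 : 0 ≤ C := le_trans (abs_nonneg _) (hC 0 ⟨le_refl 0, le_of_lt hπ⟩)
  have hp0 : 0 ≤ p := le_trans zero_le_one hp
  -- measurability of inner integrals
  have hmp : Measurable (fun t : ℝ => t ^ p) := (Real.continuous_rpow_const hp0).measurable
  have hme : Measurable (fun t : ℝ => t ^ (1 + p * ε)) :=
    (Real.continuous_rpow_const (by positivity)).measurable
  have meas_ga : Measurable (fun q : ℝ × ℝ =>
      ENNReal.ofReal (|a q.2 - a q.1| ^ p / |q.2 - q.1| ^ (1 + p * ε))) := by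
    apply ENNReal.measurable_ofReal.comp
    apply Measurable.div
    · exact hmp.comp (((ha.comp measurable_snd).sub (ha.comp measurable_fst)).abs)
    · exact hme.comp ((measurable_snd.sub measurable_fst).abs)
  have meas_gb : Measurable (fun q : ℝ × ℝ =>
      ENNReal.ofReal (|b q.2 - b q.1| ^ p / |q.2 - q.1| ^ (1 + p * ε))) := by
    apply ENNReal.measurable_ofReal.comp
    apply Measurable.div
    · exact hmp.comp (((hb.comp measurable_snd).sub (hb.comp measurable_fst)).abs)
    · exact hme.comp ((measurable_snd.sub measurable_fst).abs)
  have haG' : ∀ᵐ x ∂(volume.restrict (Set.Ioo (0:ℝ) (2 * π))),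
      (∫⁻ y in Set.Ioo (0:ℝ) (2 * π),
        ENNReal.ofReal (|a y - a x| ^ p / |y - x| ^ (1 + p * ε))) < ⊤ :=
    ae_lt_top (Measurable.lintegral_prod_right meas_ga) haG.ne
  have hbG' : ∀ᵐ x ∂(volume.restrict (Set.Ioo (0:ℝ) (2 * π))),
      (∫⁻ y in Set.Ioo (0:ℝ) (2 * π),
        ENNReal.ofReal (|b y - b x| ^ p / |y - x| ^ (1 + p * ε))) < ⊤ :=
    ae_lt_top (Measurable.lintegral_prod_right meas_gb) hbG.ne
  have hA : ∀ᵐ x ∂(volume.restrict (Set.Ioo (0:ℝ) (2 * π))), a x = 0 := by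
    filter_upwards [haG', hbG', hab, ae_restrict_mem measurableSet_Ioo]
      with x hIa hIb hbx hxs
    by_contra hax
    have hxI : x ∈ Icc (0:ℝ) (2 * π) := Ioo_subset_Icc_self hxs
    -- pointwise a.e. inequality
    have hpt : ∀ᵐ y ∂(volume.restrict (Set.Ioo (0:ℝ) (2 * π))),
        ENNReal.ofReal (|a x| ^ p * (|f y - f x| ^ p / |y - x| ^ (1 + p * ε)))
        ≤ ENNReal.ofReal ((2 ^ p * C ^ p) * (|a y - a x| ^ p / |y - x| ^ (1 + p * ε)))
          + ENNReal.ofReal ((2 ^ p) * (|b y - b x| ^ p / |y - x| ^ (1 + p * ε))) := by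
      filter_upwards [hab, ae_restrict_mem measurableSet_Ioo] with y hby hys
      set d := |y - x| ^ (1 + p * ε) with hd
      have hd0 : 0 ≤ d := Real.rpow_nonneg (abs_nonneg _) _
      have h1 : |a x| * |f y - f x| ≤ C * |a y - a x| + |b y - b x| := by
        have heq : a x * (f y - f x) = f y * (a x - a y) + (b y - b x) := by
          rw [hby, hbx]; ring
        calc |a x| * |f y - f x| = |a x * (f y - f x)| := (abs_mul _ _).symm
          _ = |f y * (a x - a y) + (b y - b x)| := by rw [heq]
          _ ≤ |f y * (a x - a y)| + |b y - b x| := abs_add_le _ _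
          _ ≤ C * |a y - a x| + |b y - b x| := by
              rw [abs_mul, abs_sub_comm (a x)]
              have := hC y (Ioo_subset_Icc_self hys)
              have := abs_nonneg (a y - a x)
              nlinarith [abs_nonneg (f y)]
      have key : |a x| ^ p * |f y - f x| ^ p
          ≤ 2 ^ p * C ^ p * |a y - a x| ^ p + 2 ^ p * |b y - b x| ^ p := by
        calc |a x| ^ p * |f y - f x| ^ p
            = (|a x| * |f y - f x|) ^ p :=
              (Real.mul_rpow (abs_nonneg _) (abs_nonneg _)).symm
          _ ≤ (C * |a y - a x| + |b y - b x|) ^ p :=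
              Real.rpow_le_rpow (by positivity) h1 hp0
          _ ≤ 2 ^ p * (C * |a y - a x|) ^ p + 2 ^ p * |b y - b x| ^ p :=
              aux_rpow_add p _ _ hp (by positivity) (abs_nonneg _)
          _ = 2 ^ p * C ^ p * |a y - a x| ^ p + 2 ^ p * |b y - b x| ^ p := by
              rw [Real.mul_rpow hC0 (abs_nonneg _)]; ring
      rcases hd0.eq_or_lt with h0 | hdpos
      · simp [← h0, div_zero]
      · rw [← ENNReal.ofReal_add (by positivity) (by positivity)]
        apply ENNReal.ofReal_le_ofReal
        rw [mul_div_assoc', mul_div_assoc', mul_div_assoc', ← add_div]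
        exact div_le_div_of_nonneg_right key hd0 |>.trans_eq rfl
    -- upper bound on the integral
    have hle : (∫⁻ y in Set.Ioo (0:ℝ) (2 * π),
        ENNReal.ofReal (|a x| ^ p * (|f y - f x| ^ p / |y - x| ^ (1 + p * ε))))
        ≤ ENNReal.ofReal (2 ^ p * C ^ p) *
            (∫⁻ y in Set.Ioo (0:ℝ) (2 * π),
              ENNReal.ofReal (|a y - a x| ^ p / |y - x| ^ (1 + p * ε)))
          + ENNReal.ofReal (2 ^ p) *
            (∫⁻ y in Set.Ioo (0:ℝ) (2 * π),
              ENNReal.ofReal (|b y - b x| ^ p / |y - x| ^ (1 + p * ε))) := by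
      calc _ ≤ ∫⁻ y in Set.Ioo (0:ℝ) (2 * π),
            (ENNReal.ofReal ((2 ^ p * C ^ p) * (|a y - a x| ^ p / |y - x| ^ (1 + p * ε)))
            + ENNReal.ofReal ((2 ^ p) * (|b y - b x| ^ p / |y - x| ^ (1 + p * ε)))) :=
            lintegral_mono_ae hpt
        _ = (∫⁻ y in Set.Ioo (0:ℝ) (2 * π),
              ENNReal.ofReal ((2 ^ p * C ^ p) * (|a y - a x| ^ p / |y - x| ^ (1 + p * ε))))
            + ∫⁻ y in Set.Ioo (0:ℝ) (2 * π),
              ENNReal.ofReal ((2 ^ p) * (|b y - b x| ^ p / |y - x| ^ (1 + p * ε))) := by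
            apply lintegral_add_left
            apply ENNReal.measurable_ofReal.comp
            apply Measurable.const_mul
            apply Measurable.div
            · exact hmp.comp ((ha.sub measurable_const).abs)
            · exact hme.comp ((measurable_id.sub measurable_const).abs)
        _ = _ := by
            congr 1
            · rw [← lintegral_const_mul' _ _ ENNReal.ofReal_ne_top]
              apply lintegral_congr
              intro y
              rw [← ENNReal.ofReal_mul (by positivity)]
            · rw [← lintegral_const_mul' _ _ ENNReal.ofReal_ne_top]
              apply lintegral_congr
              intro y
              rw [← ENNReal.ofReal_mul (by positivity)]
    have heq : (∫⁻ y in Set.Ioo (0:ℝ) (2 * π),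
        ENNReal.ofReal (|a x| ^ p * (|f y - f x| ^ p / |y - x| ^ (1 + p * ε)))) = ⊤ := by
      have hpos : 0 < |a x| ^ p := Real.rpow_pos_of_pos (abs_pos.mpr hax) p
      calc (∫⁻ y in Set.Ioo (0:ℝ) (2 * π),
            ENNReal.ofReal (|a x| ^ p * (|f y - f x| ^ p / |y - x| ^ (1 + p * ε))))
          = ∫⁻ y in Set.Ioo (0:ℝ) (2 * π),
            ENNReal.ofReal (|a x| ^ p) *
              ENNReal.ofReal (|f y - f x| ^ p / |y - x| ^ (1 + p * ε)) := by
            apply lintegral_congr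
            intro y
            rw [← ENNReal.ofReal_mul (le_of_lt hpos)]
        _ = ENNReal.ofReal (|a x| ^ p) *
            ∫⁻ y in Set.Ioo (0:ℝ) (2 * π),
              ENNReal.ofReal (|f y - f x| ^ p / |y - x| ^ (1 + p * ε)) :=
            lintegral_const_mul' _ _ ENNReal.ofReal_ne_top
        _ = ENNReal.ofReal (|a x| ^ p) * ⊤ := by rw [hdiv x hxI]
        _ = ⊤ := ENNReal.mul_top (fun h => absurd (ENNReal.ofReal_eq_zero.mp h) (not_le.mpr hpos))
    rw [heq] at hle
    have hfin : ENNReal.ofReal (2 ^ p * C ^ p) *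
            (∫⁻ y in Set.Ioo (0:ℝ) (2 * π),
              ENNReal.ofReal (|a y - a x| ^ p / |y - x| ^ (1 + p * ε)))
          + ENNReal.ofReal (2 ^ p) *
            (∫⁻ y in Set.Ioo (0:ℝ) (2 * π),
              ENNReal.ofReal (|b y - b x| ^ p / |y - x| ^ (1 + p * ε))) < ⊤ :=
      ENNReal.add_lt_top.mpr ⟨ENNReal.mul_lt_top ENNReal.ofReal_lt_top hIa,
        ENNReal.mul_lt_top ENNReal.ofReal_lt_top hIb⟩
    exact absurd (top_le_iff.mp hle) hfin.ne
  refine ⟨hA, ?_⟩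
  filter_upwards [hA, hab] with x h1 h2
  rw [h2, h1, zero_mul]
end

section
/- Let f(x) = ∑_{k=1}^∞ a_k sin(b_k x) with a_k = q^{-k}, b_k = 2^{q^k} for sufficiently large integer q. Then for every x ∈ [0, 2π], every ε ∈ (0,1) and every p ∈ [1, ∞), ∫_0^{2π} |f(y) − f(x)|^p / |y − x|^{1+pε} dy = +∞. In particular, f belongs to no Sobolev–Slobodeckij space W^{ε,p}(0,2π) with ε > 0. -/
open Real MeasureTheory Set

lemma cosLB (v : ℝ) (h : ∀ j : ℤ, 1/8 ≤ |v - (π/2 + j * π)|) : 1/9 ≤ |cos v| := by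
  set j : ℤ := round ((v - π/2)/π) with hj
  set d : ℝ := v - (π/2 + j * π) with hd
  have hπ : (0:ℝ) < π := pi_pos
  have hdle : |d| ≤ π/2 := by
    have h1 : |(v - π/2)/π - j| ≤ 1/2 := abs_sub_round _
    have h2 : d = ((v - π/2)/π - j) * π := by field_simp [hd]; ring
    rw [h2, abs_mul, abs_of_pos hπ]; nlinarith
  have hdge : 1/8 ≤ |d| := h j
  have hcv : |cos v| = |sin d| := by
    have hv : v = π/2 + ((j:ℝ) * π + d) := by rw [hd]; ring
    rw [hv, cos_add, cos_add, sin_add, cos_pi_div_two, sin_pi_div_two, sin_int_mul_pi]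
    rw [show (0 * (cos ((j:ℝ) * π) * cos d - 0 * sin d) - 1 * (0 * cos d + cos ((j:ℝ) * π) * sin d))
        = -(cos ((j:ℝ)*π) * sin d) by ring, abs_neg, abs_mul, abs_cos_int_mul_pi, one_mul]
  rw [hcv]
  have h1 : sin |d| ≤ |sin d| := by
    rcases abs_cases d with ⟨h1,_⟩|⟨h1,_⟩
    · rw [h1]; exact le_abs_self _
    · rw [h1, sin_neg]; exact neg_le_abs _
  have h2 : Real.sin (1/8) ≤ sin |d| := by
    apply Real.strictMonoOn_sin.monotoneOn _ _ hdge
    · constructor <;> [linarith; linarith]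
    · constructor <;> [linarith [abs_nonneg d]; linarith]
  have hs := Real.sin_gt_sub_cube (by norm_num : (0:ℝ) < 1/8)
  have : (1:ℝ)/9 < 1/8 - (1/8)^3/4 := by norm_num
  linarith

lemma cosWindow (ψ : ℝ) : ∃ w, ψ ≤ w ∧ w + 1/8 ≤ ψ + 1/2 ∧
    ∀ v ∈ Set.Icc w (w + 1/8), 1/9 ≤ |cos v| := by
  have hπ : 3.14 ≤ π := by linarith [pi_gt_d6]
  have hπ0 : (0:ℝ) < π := pi_pos
  obtain ⟨k, hz1, hz2⟩ : ∃ k : ℤ, ψ - 1/8 ≤ π/2 + k * π ∧ π/2 + k * π - π < ψ - 1/8 := by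
    refine ⟨⌈(ψ - 1/8 - π/2)/π⌉, ?_, ?_⟩
    · have h := Int.le_ceil ((ψ - 1/8 - π/2)/π)
      have h2 := mul_le_mul_of_nonneg_right h hπ0.le
      rw [div_mul_cancel₀ _ hπ0.ne'] at h2
      linarith
    · have h := Int.ceil_lt_add_one ((ψ - 1/8 - π/2)/π)
      have h3 := mul_lt_mul_of_pos_right h hπ0
      rw [add_mul, div_mul_cancel₀ _ hπ0.ne', one_mul] at h3
      linarith
  have hjlow : ∀ j : ℤ, j ≤ k - 1 → (π/2 + (j:ℝ) * π) ≤ π/2 + k * π - π := by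
    intro j hle
    have h1 : (j:ℝ) ≤ (k:ℝ) - 1 := by exact_mod_cast hle
    have h2 := mul_le_mul_of_nonneg_right h1 hπ0.le
    rw [sub_mul, one_mul] at h2
    linarith
  have hjhigh : ∀ j : ℤ, k + 1 ≤ j → π/2 + (k:ℝ) * π + π ≤ π/2 + (j:ℝ) * π := by
    intro j hle
    have h1 : (k:ℝ) + 1 ≤ (j:ℝ) := by exact_mod_cast hle
    have h2 := mul_le_mul_of_nonneg_right h1 hπ0.le
    rw [add_mul, one_mul] at h2
    linarith
  by_cases hca : ψ + 1/4 ≤ π/2 + k * π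
  · refine ⟨ψ, le_rfl, by linarith, fun v hv => cosLB v ?_⟩
    obtain ⟨hv1, hv2⟩ := hv
    intro j
    rcases le_or_gt j (k - 1) with hjk | hjk
    · have := hjlow j hjk
      rw [abs_of_nonneg (by linarith)]; linarith
    · have h1 : (k:ℝ) ≤ (j:ℝ) := by exact_mod_cast (by omega : k ≤ j)
      have h2 := mul_le_mul_of_nonneg_right h1 hπ0.le
      rw [abs_sub_comm, abs_of_nonneg (by linarith)]; linarith
  · refine ⟨π/2 + k*π + 1/8, by linarith, by linarith, fun v hv => cosLB v ?_⟩
    obtain ⟨hv1, hv2⟩ := hv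
    intro j
    rcases lt_trichotomy j k with hjk | hjk | hjk
    · have := hjlow j (by omega)
      rw [abs_of_nonneg (by linarith)]; linarith
    · subst hjk
      rw [abs_of_nonneg (by linarith)]; linarith
    · have := hjhigh j (by omega)
      rw [abs_sub_comm, abs_of_nonneg (by linarith)]; linarith

lemma sinlip (u v : ℝ) : |sin u - sin v| ≤ |u - v| := by
  rw [sin_sub_sin, abs_mul, abs_mul, abs_two]
  have h1 : |sin ((u-v)/2)| ≤ |(u-v)/2| := abs_sin_le_abs
  have h2 : |cos ((u+v)/2)| ≤ 1 := abs_cos_le_one _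
  have h3 : |(u-v)/2| = |u-v|/2 := by rw [abs_div]; norm_num
  nlinarith [abs_nonneg (sin ((u-v)/2)), abs_nonneg ((u-v)/2), abs_nonneg (cos ((u+v)/2)), abs_nonneg (u-v)]

lemma hsummable (q : ℕ) (hq : 2 ≤ q) (z : ℝ) :
    Summable (fun k : ℕ => ((q:ℝ)^(k+1))⁻¹ * sin ((2:ℝ)^(q^(k+1)) * z)) := by
  have hq1 : (1:ℝ) < q := by exact_mod_cast hq
  have hgeo : Summable (fun k : ℕ => ((q:ℝ)⁻¹)^(k+1)) := by
    have := (summable_geometric_of_lt_one (by positivity) (inv_lt_one_of_one_lt₀ hq1)).mul_right ((q:ℝ)⁻¹)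
    exact this.congr (fun k => (pow_succ _ _).symm)
  apply Summable.of_norm_bounded hgeo
  intro k
  rw [Real.norm_eq_abs, abs_mul, abs_inv, abs_pow]
  have h1 : |(q:ℝ)| = q := abs_of_pos (by linarith)
  rw [h1, ← inv_pow]
  have h2 : |sin ((2:ℝ)^(q^(k+1)) * z)| ≤ 1 := abs_sin_le_one _
  have h3 : (0:ℝ) ≤ ((q:ℝ)⁻¹)^(k+1) := by positivity
  nlinarith [abs_nonneg (sin ((2:ℝ)^(q^(k+1)) * z))]

lemma lownat (q m : ℕ) (hq : 100 ≤ q) (hm : 1 ≤ m) :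
    200 * m * q^(m+1) * 2^(q^m) ≤ 2^(q^(m+1)) := by
  have hq2 : 2 ≤ q := by omega
  have hsplit : (2:ℕ)^(8 + m + q*(m+1) + q^m) = 2^8 * 2^m * 2^(q*(m+1)) * 2^(q^m) := by
    simp [pow_add]
  have h1 : 200 * m * q^(m+1) * 2^(q^m) ≤ 2^(8 + m + q*(m+1) + q^m) := by
    rw [hsplit]
    have e1 : 200 ≤ 2^8 := by norm_num
    have e2 : m ≤ 2^m := (Nat.lt_two_pow_self (n := m)).le
    have e3 : q^(m+1) ≤ 2^(q*(m+1)) := by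
      calc q^(m+1) ≤ (2^q)^(m+1) := Nat.pow_le_pow_left (Nat.lt_two_pow_self (n := q)).le _
      _ = 2^(q*(m+1)) := by rw [← pow_mul]
    exact Nat.mul_le_mul (Nat.mul_le_mul (Nat.mul_le_mul e1 e2) e3) le_rfl
  have h2 : 8 + m + q*(m+1) + q^m ≤ q^(m+1) := by
    obtain ⟨m', rfl⟩ : ∃ m', m = m' + 1 := ⟨m - 1, by omega⟩
    have e4 : m' + 2 ≤ 2 * 2^m' := by
      have := Nat.lt_two_pow_self (n := m'); omega
    have e5 : 2^m' ≤ q^m' := Nat.pow_le_pow_left hq2 _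
    have e6 : q*(m'+2) ≤ 2 * q^(m'+1) := by
      calc q*(m'+2) ≤ q * (2 * 2^m') := Nat.mul_le_mul_left _ e4
      _ ≤ q * (2 * q^m') := Nat.mul_le_mul_left _ (Nat.mul_le_mul_left _ e5)
      _ = 2 * q^(m'+1) := by ring
    have e7 : m' + 1 ≤ q^(m'+1) := le_of_lt (Nat.lt_pow_self (n := m'+1) (by omega))
    have e8 : 1 ≤ q^(m'+1) := Nat.one_le_pow _ _ (by omega)
    calc 8 + (m'+1) + q*(m'+1+1) + q^(m'+1)
        ≤ 8 * q^(m'+1) + q^(m'+1) + 2*q^(m'+1) + q^(m'+1) := by nlinarith [e6, e7, e8]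
    _ ≤ 100 * q^(m'+1) := by nlinarith [e8]
    _ ≤ q * q^(m'+1) := Nat.mul_le_mul_right _ hq
    _ = q^(m'+1+1) := by ring
  calc 200 * m * q^(m+1) * 2^(q^m) ≤ 2^(8 + m + q*(m+1) + q^m) := h1
  _ ≤ 2^(q^(m+1)) := Nat.pow_le_pow_right (by norm_num) h2

lemma seriesEst (q : ℕ) (hq : 100 ≤ q) (m : ℕ) (hm : 1 ≤ m) (x y : ℝ)
    (hxy : |y - x| ≤ 2 / (2:ℝ)^(q^(m+1)))
    (hmid : 5/48 ≤ |sin ((2:ℝ)^(q^(m+1)) * y) - sin ((2:ℝ)^(q^(m+1)) * x)|) :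
    ((q:ℝ)^(m+1))⁻¹/20 ≤
      |(∑' k : ℕ, ((q:ℝ)^(k+1))⁻¹ * sin ((2:ℝ)^(q^(k+1)) * y)) -
       (∑' k : ℕ, ((q:ℝ)^(k+1))⁻¹ * sin ((2:ℝ)^(q^(k+1)) * x))| := by
  have hq2 : 2 ≤ q := by omega
  have hqR : (100:ℝ) ≤ q := by exact_mod_cast hq
  have hq0 : (0:ℝ) < q := by linarith
  set g : ℕ → ℝ := fun k =>
    ((q:ℝ)^(k+1))⁻¹ * (sin ((2:ℝ)^(q^(k+1)) * y) - sin ((2:ℝ)^(q^(k+1)) * x)) with hg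
  have hgsum : Summable g :=
    ((hsummable q hq2 y).sub (hsummable q hq2 x)).congr (fun k => by simp [hg, mul_sub])
  have hΔ : (∑' k : ℕ, ((q:ℝ)^(k+1))⁻¹ * sin ((2:ℝ)^(q^(k+1)) * y)) -
       (∑' k : ℕ, ((q:ℝ)^(k+1))⁻¹ * sin ((2:ℝ)^(q^(k+1)) * x)) = ∑' k, g k := by
    rw [← Summable.tsum_sub (hsummable q hq2 y) (hsummable q hq2 x)]
    exact tsum_congr (fun k => by simp [hg, mul_sub])
  rw [hΔ]
  have hsplit : ∑' k, g k = (∑ k ∈ Finset.range m, g k) + g m + ∑' j, g (j + (m+1)) := by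
    rw [← Summable.sum_add_tsum_nat_add (m+1) hgsum, Finset.sum_range_succ]
  set A : ℝ := ((q:ℝ)^(m+1))⁻¹ with hA
  have hA0 : 0 < A := by positivity
  -- middle term
  have hmid2 : 5/48 * A ≤ |g m| := by
    rw [hg]
    simp only [abs_mul, abs_inv, abs_pow]
    rw [abs_of_pos hq0]
    calc 5/48 * A = A * (5/48) := by ring
    _ ≤ A * |sin ((2:ℝ)^(q^(m+1)) * y) - sin ((2:ℝ)^(q^(m+1)) * x)| := by
        exact mul_le_mul_of_nonneg_left hmid hA0.le
  -- low frequencies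
  have hlow : |∑ k ∈ Finset.range m, g k| ≤ A/100 := by
    have hBm0 : (0:ℝ) < (2:ℝ)^(q^(m+1)) := by positivity
    have hterm : ∀ k ∈ Finset.range m, |g k| ≤ (2:ℝ)^(q^m) * (2 / (2:ℝ)^(q^(m+1))) := by
      intro k hk
      have hkm : k + 1 ≤ m := Finset.mem_range.mp hk
      rw [hg]
      simp only [abs_mul]
      have h1 : |(((q:ℝ)^(k+1))⁻¹)| ≤ 1 := by
        rw [abs_inv, abs_pow, abs_of_pos hq0]
        rw [inv_le_one_iff₀]
        right; exact one_le_pow₀ (by linarith)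
      have h2 : |sin ((2:ℝ)^(q^(k+1)) * y) - sin ((2:ℝ)^(q^(k+1)) * x)| ≤
          (2:ℝ)^(q^m) * (2 / (2:ℝ)^(q^(m+1))) := by
        calc |sin ((2:ℝ)^(q^(k+1)) * y) - sin ((2:ℝ)^(q^(k+1)) * x)|
            ≤ |(2:ℝ)^(q^(k+1)) * y - (2:ℝ)^(q^(k+1)) * x| := sinlip _ _
        _ = (2:ℝ)^(q^(k+1)) * |y - x| := by
            rw [← mul_sub, abs_mul, abs_of_pos (by positivity : (0:ℝ) < (2:ℝ)^(q^(k+1)))]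
        _ ≤ (2:ℝ)^(q^m) * (2 / (2:ℝ)^(q^(m+1))) := by
            apply mul_le_mul _ hxy (abs_nonneg _) (by positivity)
            exact pow_le_pow_right₀ one_le_two (Nat.pow_le_pow_right (by omega) hkm)
      calc |(((q:ℝ)^(k+1))⁻¹)| * |sin ((2:ℝ)^(q^(k+1)) * y) - sin ((2:ℝ)^(q^(k+1)) * x)|
          ≤ 1 * ((2:ℝ)^(q^m) * (2 / (2:ℝ)^(q^(m+1)))) := by
            apply mul_le_mul h1 h2 (abs_nonneg _) zero_le_one
      _ = (2:ℝ)^(q^m) * (2 / (2:ℝ)^(q^(m+1))) := one_mul _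
    calc |∑ k ∈ Finset.range m, g k| ≤ ∑ k ∈ Finset.range m, |g k| :=
          Finset.abs_sum_le_sum_abs _ _
    _ ≤ m * ((2:ℝ)^(q^m) * (2 / (2:ℝ)^(q^(m+1)))) := by
        have := Finset.sum_le_card_nsmul (Finset.range m) (fun k => |g k|)
          ((2:ℝ)^(q^m) * (2 / (2:ℝ)^(q^(m+1)))) hterm
        simpa [nsmul_eq_mul] using this
    _ ≤ A/100 := by
        have hnat : (200 * m * q^(m+1) * 2^(q^m) : ℝ) ≤ (2:ℝ)^(q^(m+1)) := by
          exact_mod_cast lownat q m hq hm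
        have hB : (0:ℝ) < (2:ℝ)^(q^(m+1)) := by positivity
        have key : (200:ℝ) * m * (q:ℝ)^(m+1) * 2^(q^m) / (2:ℝ)^(q^(m+1)) ≤ 1 :=
          (div_le_one hB).mpr hnat
        have e : (m:ℝ) * ((2:ℝ)^(q^m) * (2/(2:ℝ)^(q^(m+1)))) =
            (200 * m * (q:ℝ)^(m+1) * 2^(q^m)/(2:ℝ)^(q^(m+1))) * ((q:ℝ)^(m+1))⁻¹ / 100 := by
          field_simp
          ring
        rw [hA, e]
        have hnn : (0:ℝ) ≤ ((q:ℝ)^(m+1))⁻¹ := by positivity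
        have hX0 : (0:ℝ) ≤ (200:ℝ) * m * (q:ℝ)^(m+1) * 2^(q^m) / (2:ℝ)^(q^(m+1)) := by positivity
        nlinarith
  -- tail
  have htail : |∑' j, g (j + (m+1))| ≤ A/25 := by
    have hqinv : (q:ℝ)⁻¹ < 1 := by
      rw [inv_lt_one_iff₀]; right; linarith
    have hqinv0 : (0:ℝ) ≤ (q:ℝ)⁻¹ := by positivity
    have hhs : HasSum (fun j : ℕ => (2*((q:ℝ)⁻¹)^(m+2)) * ((q:ℝ)⁻¹)^j)
        ((2*((q:ℝ)⁻¹)^(m+2)) * (1 - (q:ℝ)⁻¹)⁻¹) :=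
      (hasSum_geometric_of_lt_one hqinv0 hqinv).mul_left _
    have hb : ∀ j : ℕ, ‖g (j + (m+1))‖ ≤ (2*((q:ℝ)⁻¹)^(m+2)) * ((q:ℝ)⁻¹)^j := by
      intro j
      rw [hg, Real.norm_eq_abs, abs_mul]
      have h1 : |(((q:ℝ)^(j+(m+1)+1))⁻¹)| = ((q:ℝ)⁻¹)^(m+2) * ((q:ℝ)⁻¹)^j := by
        rw [abs_inv, abs_pow, abs_of_pos hq0, ← inv_pow, ← pow_add]
        ring_nf
      have h2 : |sin ((2:ℝ)^(q^(j+(m+1)+1)) * y) - sin ((2:ℝ)^(q^(j+(m+1)+1)) * x)| ≤ 2 := by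
        have := abs_sin_le_one ((2:ℝ)^(q^(j+(m+1)+1)) * y)
        have := abs_sin_le_one ((2:ℝ)^(q^(j+(m+1)+1)) * x)
        calc |sin ((2:ℝ)^(q^(j+(m+1)+1)) * y) - sin ((2:ℝ)^(q^(j+(m+1)+1)) * x)|
            ≤ |sin ((2:ℝ)^(q^(j+(m+1)+1)) * y)| + |sin ((2:ℝ)^(q^(j+(m+1)+1)) * x)| := abs_sub _ _
        _ ≤ 2 := by linarith
      rw [h1]
      calc ((q:ℝ)⁻¹)^(m+2) * ((q:ℝ)⁻¹)^j * |sin ((2:ℝ)^(q^(j+(m+1)+1)) * y) - sin ((2:ℝ)^(q^(j+(m+1)+1)) * x)|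
          ≤ ((q:ℝ)⁻¹)^(m+2) * ((q:ℝ)⁻¹)^j * 2 := by
            apply mul_le_mul_of_nonneg_left h2 (by positivity)
      _ = (2*((q:ℝ)⁻¹)^(m+2)) * ((q:ℝ)⁻¹)^j := by ring
    have := tsum_of_norm_bounded hhs hb
    rw [Real.norm_eq_abs] at this
    have hinv100 : (q:ℝ)⁻¹ ≤ 1/100 := by
      have h5 := inv_anti₀ (by norm_num : (0:ℝ) < 100) hqR
      norm_num at h5 ⊢
      linarith
    have h3 : (1 - (q:ℝ)⁻¹)⁻¹ ≤ 2 := by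
      rw [inv_le_iff_one_le_mul₀ (by nlinarith [inv_pos.mpr hq0] : (0:ℝ) < 1 - (q:ℝ)⁻¹)]
      nlinarith
    have h4 : ((q:ℝ)⁻¹)^(m+2) = A * (q:ℝ)⁻¹ := by
      rw [hA, ← inv_pow]; ring
    calc |∑' j, g (j + (m+1))| ≤ 2*((q:ℝ)⁻¹)^(m+2)*(1 - (q:ℝ)⁻¹)⁻¹ := this
    _ = 2*A*(q:ℝ)⁻¹*(1 - (q:ℝ)⁻¹)⁻¹ := by rw [h4]; ring
    _ ≤ 2*A*(q:ℝ)⁻¹*2 := by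
        apply mul_le_mul_of_nonneg_left h3 (by positivity)
    _ = 4*A*(q:ℝ)⁻¹ := by ring
    _ ≤ 4*A*(1/100) := by
        apply mul_le_mul_of_nonneg_left hinv100 (by positivity)
    _ ≤ A/25 := by linarith
  -- combine
  have habs : ∀ a b c : ℝ, |b| - |a| - |c| ≤ |a + b + c| := by
    intro a b c
    have h1 : |b| = |(a + b + c) + (-a) + (-c)| := congrArg abs (by ring)
    have h2 := abs_add_three (a + b + c) (-a) (-c)
    rw [abs_neg, abs_neg] at h2
    linarith [h1 ▸ h2]
  rw [hsplit]
  have := habs (∑ k ∈ Finset.range m, g k) (g m) (∑' j, g (j + (m+1)))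
  have hfin : A/20 ≤ 5/48*A - A/100 - A/25 := by nlinarith
  calc A/20 ≤ 5/48*A - A/100 - A/25 := hfin
  _ ≤ |g m| - |∑ k ∈ Finset.range m, g k| - |∑' j, g (j + (m+1))| := by
      linarith [hmid2, hlow, htail]
  _ ≤ |∑ k ∈ Finset.range m, g k + g m + ∑' j, g (j + (m+1))| := this

lemma growth (q m n : ℕ) (ε : ℝ) (hq : 100 ≤ q) (hε0 : 0 < ε) (hε1 : ε < 1)
    (hN : 5120*((n:ℝ)+1)/ε^2 ≤ (q:ℝ)^(m+1)) :
    8*((n:ℝ)+1) ≤ ((q:ℝ)^(m+1))⁻¹ * ((2:ℝ)^(q^(m+1))/2)^ε/20 := by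
  have hqR : (100:ℝ) ≤ q := by exact_mod_cast hq
  set N : ℝ := (q:ℝ)^(m+1) with hNdef
  have hN0 : 0 < N := by positivity
  set Bm : ℝ := (2:ℝ)^(q^(m+1)) with hBm
  have hBm0 : (0:ℝ) < Bm := by positivity
  have hlog2 : (1:ℝ)/2 ≤ Real.log 2 := by linarith [Real.log_two_gt_d9]
  have step1 : N^2*ε^2/16 ≤ Bm^ε := by
    have e1 : Bm^ε = Real.exp (Real.log Bm * ε) := Real.rpow_def_of_pos hBm0 ε
    have e2 : Real.log Bm = ((q^(m+1) : ℕ) : ℝ) * Real.log 2 := by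
      rw [hBm, Real.log_pow]
    have e3 : ((q^(m+1) : ℕ) : ℝ) = N := by push_cast [hNdef]; ring
    set z : ℝ := Real.log Bm * ε with hzdef
    have hz1 : N * ε / 2 ≤ z := by
      rw [hzdef, e2, e3]
      have : N * (1/2) * ε ≤ N * Real.log 2 * ε := by
        apply mul_le_mul_of_nonneg_right _ hε0.le
        exact mul_le_mul_of_nonneg_left hlog2 hN0.le
      linarith
    have hz0 : 0 ≤ z := le_trans (by positivity) hz1
    have hexp : z^2/4 ≤ Real.exp z := by
      have h1 := Real.add_one_le_exp (z/2)
      have h2 : Real.exp z = Real.exp (z/2) * Real.exp (z/2) := by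
        rw [← Real.exp_add]; ring_nf
      nlinarith [Real.exp_pos (z/2)]
    have hsq : (N*ε/2)^2 ≤ z^2 := pow_le_pow_left₀ (by positivity) hz1 2
    rw [e1]
    calc N^2*ε^2/16 = (N*ε/2)^2/4 := by ring
    _ ≤ z^2/4 := by linarith
    _ ≤ Real.exp z := hexp
  have step2 : Bm^ε/2 ≤ (Bm/2)^ε := by
    rw [Real.div_rpow hBm0.le (by norm_num : (0:ℝ) ≤ 2)]
    have h2ε : (2:ℝ)^ε ≤ 2 := by
      have := Real.rpow_le_rpow_of_exponent_le (one_le_two : (1:ℝ) ≤ 2) hε1.le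
      rwa [Real.rpow_one] at this
    apply div_le_div_of_nonneg_left (by positivity) (by positivity) h2ε
  have hε2 : (0:ℝ) < ε^2 := by positivity
  calc 8*((n:ℝ)+1) = (5120*((n:ℝ)+1)/ε^2) * ε^2/640 := by field_simp; ring
  _ ≤ N * ε^2/640 := by
      have := mul_le_mul_of_nonneg_right hN hε2.le
      linarith
  _ = N⁻¹*(N^2*ε^2/32)/20 := by field_simp; ring
  _ ≤ N⁻¹*((Bm/2)^ε)/20 := by
      have : N^2*ε^2/32 ≤ (Bm/2)^ε := by linarith
      gcongr

lemma measureLB (K len : ℝ) (hK : 0 ≤ K) (hlen : 0 ≤ len) (lo : ℝ)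
    (F : ℝ → ENNReal) (hsub : Set.Icc lo (lo+len) ⊆ Set.Ioo (0:ℝ) (2*π))
    (hF : ∀ y ∈ Set.Icc lo (lo+len), ENNReal.ofReal K ≤ F y) :
    ENNReal.ofReal (K * len) ≤ ∫⁻ y in Set.Ioo (0:ℝ) (2*π), F y := by
  have hmeas : MeasurableSet (Set.Icc lo (lo+len)) := measurableSet_Icc
  have e1 : ENNReal.ofReal (K*len) = ENNReal.ofReal K * volume (Set.Icc lo (lo+len)) := by
    rw [Real.volume_Icc, ENNReal.ofReal_mul hK]
    congr 2
    ring
  have e2 : ENNReal.ofReal K * volume (Set.Icc lo (lo+len)) =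
      ∫⁻ y in Set.Ioo (0:ℝ) (2*π), (Set.Icc lo (lo+len)).indicator (fun _ => ENNReal.ofReal K) y := by
    rw [lintegral_indicator hmeas, setLIntegral_const, Measure.restrict_apply hmeas,
      Set.inter_eq_self_of_subset_left hsub]
  rw [e1, e2]
  apply lintegral_mono
  intro y
  by_cases hy : y ∈ Set.Icc lo (lo+len)
  · rw [Set.indicator_of_mem hy]
    exact hF y hy
  · rw [Set.indicator_of_notMem hy]
    exact zero_le

set_option maxHeartbeats 2000000 in
lemma keyLemma (q : ℕ) (hq : 100 ≤ q) (x : ℝ) (hx0 : 0 ≤ x) (hx2π : x ≤ 2*π)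
    (ε : ℝ) (hε0 : 0 < ε) (hε1 : ε < 1) (p : ℝ) (hp : 1 ≤ p) (n : ℕ) :
    (n : ENNReal) ≤ ∫⁻ y in Set.Ioo (0:ℝ) (2 * π),
          ENNReal.ofReal
            ((|(∑' k : ℕ, ((q : ℝ) ^ (k + 1))⁻¹ * Real.sin (((2:ℝ) ^ (q ^ (k + 1))) * y)) -
               (∑' k : ℕ, ((q : ℝ) ^ (k + 1))⁻¹ * Real.sin (((2:ℝ) ^ (q ^ (k + 1))) * x))|) ^ p
              / |y - x| ^ (1 + p * ε)) := by
  have hq2 : 2 ≤ q := by omega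
  have hqR : (100:ℝ) ≤ q := by exact_mod_cast hq
  have hq0 : (0:ℝ) < q := by linarith
  have hπlo : 3.14 ≤ π := by linarith [pi_gt_d6]
  have hπ0 : (0:ℝ) < π := pi_pos
  obtain ⟨G, hGdef⟩ : ∃ G' : ℝ → ENNReal, G' = fun y => ENNReal.ofReal
            ((|(∑' k : ℕ, ((q : ℝ) ^ (k + 1))⁻¹ * Real.sin (((2:ℝ) ^ (q ^ (k + 1))) * y)) -
               (∑' k : ℕ, ((q : ℝ) ^ (k + 1))⁻¹ * Real.sin (((2:ℝ) ^ (q ^ (k + 1))) * x))|) ^ p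
              / |y - x| ^ (1 + p * ε)) := ⟨_, rfl⟩
  rw [show (fun y => ENNReal.ofReal
            ((|(∑' k : ℕ, ((q : ℝ) ^ (k + 1))⁻¹ * Real.sin (((2:ℝ) ^ (q ^ (k + 1))) * y)) -
               (∑' k : ℕ, ((q : ℝ) ^ (k + 1))⁻¹ * Real.sin (((2:ℝ) ^ (q ^ (k + 1))) * x))|) ^ p
              / |y - x| ^ (1 + p * ε))) = G from hGdef.symm]
  -- choose m
  obtain ⟨m₀, hm₀⟩ := pow_unbounded_of_one_lt (R := ℝ) (5120*((n:ℝ)+1)/ε^2)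
    (by exact_mod_cast (by omega : 1 < q) : (1:ℝ) < (q:ℝ))
  obtain ⟨m, hmdef⟩ : ∃ m' : ℕ, m' = m₀ + 1 := ⟨_, rfl⟩
  have hm1 : 1 ≤ m := by omega
  have hN : 5120*((n:ℝ)+1)/ε^2 ≤ (q:ℝ)^(m+1) := by
    refine le_trans hm₀.le (pow_le_pow_right₀ (by linarith : (1:ℝ) ≤ q) (by omega))
  obtain ⟨Bm, hBmdef⟩ : ∃ B : ℝ, B = (2:ℝ)^(q^(m+1)) := ⟨_, rfl⟩
  have hBm0 : (0:ℝ) < Bm := by rw [hBmdef]; positivity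
  have hBm4 : (4:ℝ) ≤ Bm := by
    rw [hBmdef]
    calc (4:ℝ) = 2^2 := by norm_num
    _ ≤ 2^(q^(m+1)) := by
        apply pow_le_pow_right₀ one_le_two
        calc 2 ≤ 100 := by norm_num
        _ ≤ q := hq
        _ ≤ q^(m+1) := Nat.le_self_pow (by omega) q
  have h1Bm : 1/Bm ≤ 1/4 := by
    rw [div_le_div_iff₀ hBm0 (by norm_num : (0:ℝ) < 4)]; linarith
  obtain ⟨A, hA⟩ : ∃ A' : ℝ, A' = ((q:ℝ)^(m+1))⁻¹ := ⟨_, rfl⟩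
  have hA0 : 0 < A := by rw [hA]; positivity
  -- sign and window
  obtain ⟨s, hs⟩ : ∃ s' : ℝ, s' = if x ≤ π then 1 else -1 := ⟨_, rfl⟩
  have hs1 : s = 1 ∨ s = -1 := by rw [hs]; split <;> simp
  have hss : s * s = 1 := by rcases hs1 with h|h <;> rw [h] <;> norm_num
  obtain ⟨w, hw1, hw2, hwcos⟩ := cosWindow (s * (Bm * x) + 1/2)
  obtain ⟨c, hc⟩ : ∃ c' : ℝ, c' = 2*(w - s*(Bm*x)) := ⟨_, rfl⟩
  have hc1 : 1 ≤ c := by rw [hc]; linarith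
  have hc2 : c + 1/4 ≤ 2 := by rw [hc]; linarith
  obtain ⟨lo, hlo⟩ : ∃ l : ℝ, l = x + s*c/Bm + (s-1)/(8*Bm) := ⟨_, rfl⟩
  obtain ⟨len, hlenn⟩ : ∃ l : ℝ, l = 1/(4*Bm) := ⟨_, rfl⟩
  have hlen0 : 0 < len := by rw [hlenn]; positivity
  -- t facts
  have hyfacts : ∀ y, lo ≤ y → y ≤ lo + len →
      c ≤ s*(Bm*(y-x)) ∧ s*(Bm*(y-x)) ≤ c + 1/4 := by
    intro y hy1 hy2
    rw [hlo] at hy1 hy2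
    rw [hlenn] at hy2
    rcases hs1 with h|h <;> rw [h] at hy1 hy2 ⊢
    · have e0 : x + 1*c/Bm + ((1:ℝ)-1)/(8*Bm) = x + c/Bm := by ring
      have h1 : c/Bm ≤ y - x := by linarith [hy1, e0]
      have h2 : y - x ≤ c/Bm + 1/(4*Bm) := by linarith [hy2, e0]
      have e1 : Bm * (c/Bm) = c := by field_simp
      have e2 : Bm * (c/Bm + 1/(4*Bm)) = c + 1/4 := by field_simp
      constructor
      · have h3 := mul_le_mul_of_nonneg_left h1 hBm0.le
        rw [e1] at h3; linarith
      · have h3 := mul_le_mul_of_nonneg_left h2 hBm0.le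
        rw [e2] at h3; linarith
    · have e0 : x + (-1:ℝ)*c/Bm + ((-1:ℝ)-1)/(8*Bm) = x - c/Bm - 1/(4*Bm) := by ring
      have h1 : -(c/Bm) - 1/(4*Bm) ≤ y - x := by linarith [hy1, e0]
      have h2 : y - x ≤ -(c/Bm) := by linarith [hy2, e0]
      have e1 : Bm * (c/Bm) = c := by field_simp
      have e2 : Bm * (c/Bm + 1/(4*Bm)) = c + 1/4 := by field_simp
      constructor
      · have h3 := mul_le_mul_of_nonneg_left h2 hBm0.le
        have e3 : Bm * -(c/Bm) = -(Bm*(c/Bm)) := by ring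
        rw [e3, e1] at h3; nlinarith
      · have h3 := mul_le_mul_of_nonneg_left h1 hBm0.le
        have e4 : Bm * (-(c/Bm) - 1/(4*Bm)) = -(Bm*(c/Bm + 1/(4*Bm))) := by ring
        rw [e4, e2] at h3; nlinarith
  have habs : ∀ y, lo ≤ y → y ≤ lo + len →
      |y - x| = s*(Bm*(y-x))/Bm ∧ 1/Bm ≤ |y - x| ∧ |y - x| ≤ 2/Bm := by
    intro y hy1 hy2
    obtain ⟨ht1, ht2⟩ := hyfacts y hy1 hy2
    have h5 : s*(Bm*(y-x)) = Bm * |y - x| := by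
      rcases hs1 with h|h <;> rw [h] at ht1 ⊢
      · have hnn : 0 ≤ y - x := by nlinarith
        rw [abs_of_nonneg hnn]; ring
      · have hnp : y - x ≤ 0 := by nlinarith
        rw [abs_of_nonpos hnp]; ring
    have he : |y - x| = s*(Bm*(y-x))/Bm := by
      rw [h5, mul_comm, mul_div_assoc, div_self hBm0.ne', mul_one]
    refine ⟨he, ?_, ?_⟩
    · rw [div_le_iff₀ hBm0]
      linarith [ht1, hc1, h5, mul_comm Bm |y - x|]
    · rw [le_div_iff₀ hBm0]
      linarith [ht2, hc2, h5, mul_comm Bm |y - x|]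
    -- middle estimate
  have hmid : ∀ y, lo ≤ y → y ≤ lo + len → 5/48 ≤ |sin (Bm * y) - sin (Bm * x)| := by
    intro y hy1 hy2
    obtain ⟨ht1, ht2⟩ := hyfacts y hy1 hy2
    obtain ⟨t, htdef⟩ : ∃ t : ℝ, t = s*(Bm*(y-x)) := ⟨_, rfl⟩
    rw [← htdef] at ht1 ht2
    have hst : s * t = Bm*(y-x) := by rw [htdef, ← mul_assoc, hss, one_mul]
    have e1 := sin_sub_sin (Bm*y) (Bm*x)
    have e2 : (Bm*y - Bm*x)/2 = s*t/2 := by rw [hst]; ring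
    have e3 : (Bm*y + Bm*x)/2 = Bm*x + s*(t/2) := by
      have : Bm*x + s*(t/2) = Bm*x + (s*t)/2 := by ring
      rw [this, hst]; ring
    rw [e1, e2, e3, abs_mul, abs_mul, abs_two]
    have ht12a : 1/2 ≤ t/2 := by linarith
    have ht12b : t/2 ≤ 1 := by linarith
    have hπ2 : (1:ℝ) ≤ π/2 := by linarith
    have hsin_t2 : 15/32 ≤ sin (t/2) := by
      have hmono := Real.strictMonoOn_sin.monotoneOn
        (Set.mem_Icc.mpr ⟨by linarith, by linarith⟩ : (1/2:ℝ) ∈ Set.Icc (-(π/2)) (π/2))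
        (Set.mem_Icc.mpr ⟨by linarith, by linarith⟩ : t/2 ∈ Set.Icc (-(π/2)) (π/2))
        (by linarith)
      have hs12 := Real.sin_gt_sub_cube (by norm_num : (0:ℝ) < 1/2)
      nlinarith [hmono, hs12]
    have hsin_nonneg : 0 ≤ sin (t/2) :=
      sin_nonneg_of_nonneg_of_le_pi (by linarith) (by linarith)
    have habs_sin : |sin (s*t/2)| = sin (t/2) := by
      rcases hs1 with h|h <;> rw [h]
      · rw [show (1:ℝ)*t/2 = t/2 by ring, abs_of_nonneg hsin_nonneg]
      · rw [show (-1:ℝ)*t/2 = -(t/2) by ring, sin_neg, abs_neg, abs_of_nonneg hsin_nonneg]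
    have hv : |cos (Bm*x + s*(t/2))| = |cos (s*(Bm*x) + t/2)| := by
      rcases hs1 with h|h <;> rw [h]
      · exact congrArg abs (congrArg cos (by ring))
      · rw [show Bm*x + (-1:ℝ)*(t/2) = -((-1)*(Bm*x) + t/2) by ring, cos_neg]
    have hvmem : s*(Bm*x) + t/2 ∈ Set.Icc w (w + 1/8) := by
      constructor
      · have : c = 2*(w - s*(Bm*x)) := hc
        linarith
      · have : c = 2*(w - s*(Bm*x)) := hc
        linarith
    have hcosv := hwcos _ hvmem
    rw [hv]
    have hprod : (15:ℝ)/32 * (1/9) ≤ sin (t/2) * |cos (s*(Bm*x) + t/2)| :=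
      mul_le_mul hsin_t2 hcosv (by norm_num) (by linarith)
    rw [habs_sin]
    nlinarith [hprod]
  -- key series estimate
  have hKey : ∀ y, lo ≤ y → y ≤ lo + len → A/20 ≤
      |(∑' k : ℕ, ((q:ℝ)^(k+1))⁻¹ * sin ((2:ℝ)^(q^(k+1)) * y)) -
       (∑' k : ℕ, ((q:ℝ)^(k+1))⁻¹ * sin ((2:ℝ)^(q^(k+1)) * x))| := by
    intro y hy1 hy2
    rw [hA]
    apply seriesEst q hq m hm1 x y
    · obtain ⟨-, -, h3⟩ := habs y hy1 hy2
      rw [← hBmdef]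
      exact h3
    · rw [← hBmdef]
      exact hmid y hy1 hy2
  -- subset of (0, 2π)
  have h2Bm : 2/Bm ≤ 1/2 := by
    rw [div_le_div_iff₀ hBm0 (by norm_num : (0:ℝ) < 2)]; linarith
  have hsub : Set.Icc lo (lo+len) ⊆ Set.Ioo (0:ℝ) (2*π) := by
    intro y hy
    obtain ⟨hy1, hy2⟩ := hy
    have hcB0 : 0 < c/Bm := by positivity
    have hcB2 : c/Bm ≤ 2/Bm := by gcongr; linarith
    have hlB : len ≤ 1/8 := by
      rw [hlenn, div_le_div_iff₀ (by positivity) (by norm_num : (0:ℝ) < 8)]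
      linarith
    rcases hs1 with h|h
    · have hxπ : x ≤ π := by
        by_contra hcon
        rw [hs, if_neg hcon] at h
        norm_num at h
      have helo : lo = x + c/Bm := by
        rw [hlo, h]; ring
      constructor
      · linarith only [hy1, helo, hx0, hcB0]
      · have hyy : y ≤ x + c/Bm + len := by
          rw [helo] at hy2; linarith only [hy2]
        linarith only [hyy, hxπ, h2Bm, hcB2, hlB, hπlo]
    · have hxπ : ¬ (x ≤ π) := by
        intro hcon
        rw [hs, if_pos hcon] at h
        norm_num at h
      push_neg at hxπ
      have helo : lo = x - c/Bm - 1/(4*Bm) := by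
        rw [hlo, h]; ring
      have hlB' : 1/(4*Bm) ≤ 1/8 := by rw [← hlenn]; exact hlB
      constructor
      · linarith only [hy1, helo, h2Bm, hcB2, hπlo, hlB', hxπ]
      · have hyy : y ≤ x - c/Bm := by
          rw [helo, hlenn] at hy2; linarith only [hy2]
        linarith only [hyy, hx2π, hcB0]
  -- pointwise bound of the integrand
  obtain ⟨K, hK⟩ : ∃ K : ℝ, K = (A/20)^p / ((2/Bm)^(1+p*ε)) := ⟨_, rfl⟩
  have h1pε : (0:ℝ) < 1 + p*ε := by nlinarith
  have hp0 : (0:ℝ) < p := by linarith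
  have hK0 : 0 ≤ K := by
    rw [hK]
    apply div_nonneg (Real.rpow_nonneg (by positivity) _) (Real.rpow_nonneg (by positivity) _)
  have hpt : ∀ y ∈ Set.Icc lo (lo+len), ENNReal.ofReal K ≤ G y := by
    intro y hy
    obtain ⟨hy1, hy2⟩ := hy
    rw [hGdef]
    apply ENNReal.ofReal_le_ofReal
    obtain ⟨-, hb1, hb2⟩ := habs y hy1 hy2
    have hΔ := hKey y hy1 hy2
    have habs0 : 0 < |y - x| := lt_of_lt_of_le (by positivity) hb1
    rw [hK]
    apply div_le_div₀ (Real.rpow_nonneg (abs_nonneg _) _)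
    · exact Real.rpow_le_rpow (by positivity) hΔ (by linarith)
    · exact Real.rpow_pos_of_pos habs0 _
    · exact Real.rpow_le_rpow (abs_nonneg _) hb2 h1pε.le
  -- final numeric bound
  have hGG : 8*((n:ℝ)+1) ≤ A * ((Bm/2)^ε)/20 := by
    rw [hA, hBmdef]
    exact growth q m n ε hq hε0 hε1 hN
  have hn0 : (0:ℝ) ≤ n := Nat.cast_nonneg n
  have hGG1 : 1 ≤ A*((Bm/2)^ε)/20 := by nlinarith
  have hKlen : (n:ℝ) ≤ K * len := by
    have hhalf : (0:ℝ) < Bm/2 := by linarith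
    have e1 : ((2:ℝ)/Bm) = (Bm/2)⁻¹ := by rw [inv_div]
    have e2 : ((2/Bm)^(1+p*ε) : ℝ) = ((Bm/2)^(1+p*ε))⁻¹ := by
      rw [e1, ← Real.inv_rpow hhalf.le]
    have e3 : (Bm/2)^(1+p*ε) = (Bm/2) * ((Bm/2)^ε)^p := by
      rw [Real.rpow_add hhalf, Real.rpow_one, mul_comm p ε, Real.rpow_mul hhalf.le]
    have e4 : (A/20)^p * ((Bm/2)^ε)^p = (A/20 * (Bm/2)^ε)^p :=
      (Real.mul_rpow (by positivity) (Real.rpow_nonneg hhalf.le _)).symm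
    have e6 : (Bm/2)*(1/(4*Bm)) = 1/8 := by field_simp; ring
    have eK : K * len = (A/20 * (Bm/2)^ε)^p / 8 := by
      calc K * len = (A/20)^p * ((Bm/2) * ((Bm/2)^ε)^p) * (1/(4*Bm)) := by
            rw [hK, hlenn, e2, div_inv_eq_mul, e3]
      _ = ((A/20)^p * ((Bm/2)^ε)^p) * ((Bm/2) * (1/(4*Bm))) := by ring
      _ = (A/20 * (Bm/2)^ε)^p * (1/8) := by rw [e4, e6]
      _ = (A/20 * (Bm/2)^ε)^p / 8 := by ring
    have hbase1 : 1 ≤ A/20 * (Bm/2)^ε := by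
      have e7 : A*((Bm/2)^ε)/20 = A/20 * (Bm/2)^ε := by ring
      linarith only [hGG1, e7]
    have hpow : A/20*(Bm/2)^ε ≤ (A/20*(Bm/2)^ε)^p := by
      have := Real.rpow_le_rpow_of_exponent_le hbase1 hp
      rwa [Real.rpow_one] at this
    rw [eK]
    have e7 : A*((Bm/2)^ε)/20 = A/20 * (Bm/2)^ε := by ring
    linarith only [hGG, hpow, e7, hn0]
  calc (n : ENNReal) = ENNReal.ofReal ((n:ℝ)) := (ENNReal.ofReal_natCast n).symm
  _ ≤ ENNReal.ofReal (K * len) := ENNReal.ofReal_le_ofReal hKlen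
  _ ≤ ∫⁻ y in Set.Ioo (0:ℝ) (2*π), G y :=
      measureLB K len hK0 hlen0.le lo G hsub hpt

/-- For sufficiently large integer `q`, the lacunary series
`f x = ∑_{k≥1} q⁻ᵏ sin (2^(q^k) x)` satisfies, for every `x ∈ [0,2π]`, every
`ε ∈ (0,1)` and every `p ∈ [1,∞)`,
`∫_0^{2π} |f y − f x|^p / |y − x|^{1+pε} dy = +∞`;
in particular `f` belongs to no space `W^{ε,p}(0,2π)` with `ε > 0`. -/
theorem stmt10 :
    ∃ q₀ : ℕ, ∀ q : ℕ, q₀ ≤ q →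
      ∀ x ∈ Set.Icc (0:ℝ) (2 * π), ∀ ε : ℝ, 0 < ε → ε < 1 → ∀ p : ℝ, 1 ≤ p →
        ∫⁻ y in Set.Ioo (0:ℝ) (2 * π),
          ENNReal.ofReal
            ((|(∑' k : ℕ, ((q : ℝ) ^ (k + 1))⁻¹ * Real.sin (((2:ℝ) ^ (q ^ (k + 1))) * y)) -
               (∑' k : ℕ, ((q : ℝ) ^ (k + 1))⁻¹ * Real.sin (((2:ℝ) ^ (q ^ (k + 1))) * x))|) ^ p
              / |y - x| ^ (1 + p * ε)) = ⊤ := by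
  refine ⟨100, fun q hq x hx ε hε0 hε1 p hp => ?_⟩
  obtain ⟨hx0, hx2π⟩ := hx
  set I := ∫⁻ y in Set.Ioo (0:ℝ) (2 * π),
          ENNReal.ofReal
            ((|(∑' k : ℕ, ((q : ℝ) ^ (k + 1))⁻¹ * Real.sin (((2:ℝ) ^ (q ^ (k + 1))) * y)) -
               (∑' k : ℕ, ((q : ℝ) ^ (k + 1))⁻¹ * Real.sin (((2:ℝ) ^ (q ^ (k + 1))) * x))|) ^ p
              / |y - x| ^ (1 + p * ε)) with hI
  have key : ∀ n : ℕ, (n : ENNReal) ≤ I := by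
    intro n
    rw [hI]
    exact keyLemma q hq x hx0 hx2π ε hε0 hε1 p hp n
  rcases eq_or_ne I ⊤ with h | h
  · exact h
  · exfalso
    obtain ⟨n, hn⟩ := exists_nat_gt I.toReal
    have h2 := ENNReal.toReal_mono h (key n)
    rw [ENNReal.toReal_natCast] at h2
    linarith
end

section
/- Let u = (u₁, u₂) be functions on the boundary curve {(F(θ)cos θ, F(θ)sin θ)} whose pullbacks θ ↦ u_j(F(θ)cos θ, F(θ)sin θ) lie in W^{ε,p}(𝕋) for some ε ∈ (0,1), p ≥ 1. If the normal component n·u vanishes identically on the boundary, where n is as above with f = F' the separating function, then u₁ = u₂ = 0 on the boundary. -/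
open Real MeasureTheory Set Filter

namespace Stmt13Aux

lemma two_rpow_bound {p s t : ℝ} (hp : 0 ≤ p) (hs : 0 ≤ s) (ht : 0 ≤ t) :
    (s + t) ^ p ≤ 2 ^ p * (s ^ p + t ^ p) := by
  have h2 : (0:ℝ) ≤ 2 ^ p := Real.rpow_nonneg (by norm_num) p
  rcases le_total s t with h | h
  · calc (s + t) ^ p ≤ (2 * t) ^ p := Real.rpow_le_rpow (by linarith) (by linarith) hp
      _ = 2 ^ p * t ^ p := Real.mul_rpow (by norm_num) ht
      _ ≤ 2 ^ p * (s ^ p + t ^ p) := by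
          have := Real.rpow_nonneg hs p
          nlinarith
  · calc (s + t) ^ p ≤ (2 * s) ^ p := Real.rpow_le_rpow (by linarith) (by linarith) hp
      _ = 2 ^ p * s ^ p := Real.mul_rpow (by norm_num) hs
      _ ≤ 2 ^ p * (s ^ p + t ^ p) := by
          have := Real.rpow_nonneg ht p
          nlinarith

lemma four_rpow_bound {p t1 t2 t3 t4 : ℝ} (hp : 0 ≤ p) (h1 : 0 ≤ t1) (h2 : 0 ≤ t2)
    (h3 : 0 ≤ t3) (h4 : 0 ≤ t4) :
    (t1 + t2 + t3 + t4) ^ p ≤ 4 ^ p * (t1 ^ p + t2 ^ p + t3 ^ p + t4 ^ p) := by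
  have h2p : (0:ℝ) ≤ 2 ^ p := Real.rpow_nonneg (by norm_num) p
  have e : t1 + t2 + t3 + t4 = (t1 + t2) + (t3 + t4) := by ring
  rw [e]
  calc ((t1 + t2) + (t3 + t4)) ^ p ≤ 2 ^ p * ((t1 + t2) ^ p + (t3 + t4) ^ p) :=
        two_rpow_bound hp (by linarith) (by linarith)
    _ ≤ 2 ^ p * ((2 ^ p * (t1 ^ p + t2 ^ p)) + (2 ^ p * (t3 ^ p + t4 ^ p))) := by
        have b1 := two_rpow_bound hp h1 h2
        have b2 := two_rpow_bound hp h3 h4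
        nlinarith
    _ = 4 ^ p * (t1 ^ p + t2 ^ p + t3 ^ p + t4 ^ p) := by
        have : (4:ℝ) ^ p = 2 ^ p * 2 ^ p := by
          rw [← Real.mul_rpow (by norm_num) (by norm_num)]; norm_num
        rw [this]; ring

lemma lipschitz_sin (x y : ℝ) : |Real.sin y - Real.sin x| ≤ |y - x| := by
  rw [Real.sin_sub_sin]
  have h1 : |Real.sin ((y - x)/2)| ≤ |(y - x)/2| := Real.abs_sin_le_abs
  have h2 : |Real.cos ((y + x)/2)| ≤ 1 := Real.abs_cos_le_one _
  have h3 : |(y - x)/2| = |y - x|/2 := by rw [abs_div, abs_two]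
  rw [abs_mul, abs_mul, abs_two]
  rw [h3] at h1
  nlinarith [abs_nonneg (Real.sin ((y - x)/2)), abs_nonneg (y - x), abs_nonneg (Real.cos ((y + x)/2))]

lemma lipschitz_cos (x y : ℝ) : |Real.cos y - Real.cos x| ≤ |y - x| := by
  rw [Real.cos_sub_cos]
  have h1 : |Real.sin ((y - x)/2)| ≤ |(y - x)/2| := Real.abs_sin_le_abs
  have h2 : |Real.sin ((y + x)/2)| ≤ 1 := Real.abs_sin_le_one _
  have h3 : |(y - x)/2| = |y - x|/2 := by rw [abs_div, abs_two]
  rw [abs_mul, abs_mul, abs_neg, abs_two]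
  rw [h3] at h1
  nlinarith [abs_nonneg (Real.sin ((y - x)/2)), abs_nonneg (y - x), abs_nonneg (Real.sin ((y + x)/2))]

lemma K0_lt_top {s : ℝ} (hs : -1 < s) :
    ∫⁻ t in Set.Ioo (0:ℝ) (2*π), ENNReal.ofReal (t ^ s) < ⊤ := by
  have h1 : IntervalIntegrable (fun t : ℝ => t ^ s) volume 0 (2*π) :=
    intervalIntegral.intervalIntegrable_rpow' hs
  have h2 : IntegrableOn (fun t : ℝ => t ^ s) (Set.Ioc 0 (2*π)) volume := by
    simpa [intervalIntegrable_iff_integrableOn_Ioc_of_le (by positivity : (0:ℝ) ≤ 2*π)] using h1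
  have h3 : ∫⁻ t in Set.Ioc (0:ℝ) (2*π), ENNReal.ofReal (t ^ s) < ⊤ :=
    lt_of_le_of_lt (lintegral_mono fun t => Real.ofReal_le_enorm _) h2.2
  exact lt_of_le_of_lt (lintegral_mono_set Set.Ioo_subset_Ioc_self) h3

lemma slice_bound {s : ℝ} {x : ℝ} (hx : x ∈ Set.Ioo (0:ℝ) (2*π)) :
    ∫⁻ y in Set.Ioo (0:ℝ) (2*π), ENNReal.ofReal (|y - x| ^ s) ≤
      2 * ∫⁻ t in Set.Ioo (0:ℝ) (2*π), ENNReal.ofReal (t ^ s) := by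
  set h : ℝ → ENNReal := fun t => (Set.Ioo (0:ℝ) (2*π)).indicator (fun t => ENNReal.ofReal (t ^ s)) t with hh
  have hmeas : Measurable h := ((measurable_id.pow_const s).ennreal_ofReal).indicator measurableSet_Ioo
  have hae : ∀ᵐ (y : ℝ), y ≠ x := by
    rw [ae_iff]
    simpa using (Real.volume_singleton (a := x))
  have key : ∀ y : ℝ, y ≠ x →
      (Set.Ioo (0:ℝ) (2*π)).indicator (fun y => ENNReal.ofReal (|y - x| ^ s)) y ≤
        h (y - x) + h (x - y) := by
    intro y hy
    by_cases hyS : y ∈ Set.Ioo (0:ℝ) (2*π)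
    · rw [Set.indicator_of_mem hyS]
      rcases lt_or_gt_of_ne hy with hlt | hgt
      · -- y < x, use h (x - y)
        have hmem : x - y ∈ Set.Ioo (0:ℝ) (2*π) := ⟨by linarith [hlt], by linarith [hx.2, hyS.1]⟩
        have : ENNReal.ofReal (|y - x| ^ s) = h (x - y) := by
          rw [hh]; simp only [Set.indicator_of_mem hmem]
          rw [abs_sub_comm, abs_of_pos (by linarith : (0:ℝ) < x - y)]
        rw [this]; exact le_add_self
      · have hmem : y - x ∈ Set.Ioo (0:ℝ) (2*π) := ⟨by linarith [hgt], by linarith [hx.1, hyS.2]⟩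
        have : ENNReal.ofReal (|y - x| ^ s) = h (y - x) := by
          rw [hh]; simp only [Set.indicator_of_mem hmem]
          rw [abs_of_pos (by linarith : (0:ℝ) < y - x)]
        rw [this]; exact self_le_add_right _ _
    · rw [Set.indicator_of_notMem hyS]; exact zero_le
  have hI : ∫⁻ t, h t = ∫⁻ t in Set.Ioo (0:ℝ) (2*π), ENNReal.ofReal (t ^ s) := by
    simp only [hh]
    exact lintegral_indicator measurableSet_Ioo _
  have h4 : ∫⁻ y, h (x - y) = ∫⁻ t, h t := by
    calc ∫⁻ y, h (x - y) = ∫⁻ y, h (x + (-y)) := by simp only [sub_eq_add_neg]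
      _ = ∫⁻ z, h (x + z) ∂(Measure.map Neg.neg volume) :=
          (lintegral_map (hmeas.comp (measurable_const.add measurable_id)) measurable_neg).symm
      _ = ∫⁻ z, h (x + z) := by rw [Measure.map_neg_eq_self]
      _ = ∫⁻ t, h t := lintegral_add_left_eq_self h x
  calc ∫⁻ y in Set.Ioo (0:ℝ) (2*π), ENNReal.ofReal (|y - x| ^ s)
      = ∫⁻ y, (Set.Ioo (0:ℝ) (2*π)).indicator (fun y => ENNReal.ofReal (|y - x| ^ s)) y :=
        (lintegral_indicator measurableSet_Ioo _).symm
    _ ≤ ∫⁻ y, (h (y - x) + h (x - y)) := lintegral_mono_ae (hae.mono fun y hy => key y hy)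
    _ = (∫⁻ y, h (y - x)) + ∫⁻ y, h (x - y) :=
        lintegral_add_left (hmeas.comp (measurable_id.sub_const x)) _
    _ = (∫⁻ t, h t) + ∫⁻ t, h t := by rw [lintegral_sub_right_eq_self h x, h4]
    _ = 2 * ∫⁻ t in Set.Ioo (0:ℝ) (2*π), ENNReal.ofReal (t ^ s) := by
        rw [hI]; exact (two_mul _).symm

lemma Lp_bound {p : ℝ} (hp : 0 < p) (v w a : ℝ → ℝ) (hv : Measurable v)
    (h : ∀ x, |a x| ≤ |v x| + |w x|)
    (hvLp : ∫⁻ x in Set.Ioo (0:ℝ) (2*π), ENNReal.ofReal (|v x| ^ p) < ⊤)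
    (hwLp : ∫⁻ x in Set.Ioo (0:ℝ) (2*π), ENNReal.ofReal (|w x| ^ p) < ⊤) :
    ∫⁻ x in Set.Ioo (0:ℝ) (2*π), ENNReal.ofReal (|a x| ^ p) < ⊤ := by
  have key : ∀ x : ℝ, ENNReal.ofReal (|a x| ^ p) ≤
      ENNReal.ofReal (2 ^ p) * (ENNReal.ofReal (|v x| ^ p) + ENNReal.ofReal (|w x| ^ p)) := by
    intro x
    have h1 : |a x| ^ p ≤ 2 ^ p * (|v x| ^ p + |w x| ^ p) :=
      le_trans (Real.rpow_le_rpow (abs_nonneg _) (h x) hp.le)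
        (two_rpow_bound hp.le (abs_nonneg _) (abs_nonneg _))
    calc ENNReal.ofReal (|a x| ^ p) ≤ ENNReal.ofReal (2 ^ p * (|v x| ^ p + |w x| ^ p)) :=
          ENNReal.ofReal_le_ofReal h1
      _ = ENNReal.ofReal (2 ^ p) * (ENNReal.ofReal (|v x| ^ p) + ENNReal.ofReal (|w x| ^ p)) := by
          rw [ENNReal.ofReal_mul (Real.rpow_nonneg (by norm_num) p),
            ENNReal.ofReal_add (Real.rpow_nonneg (abs_nonneg _) p) (Real.rpow_nonneg (abs_nonneg _) p)]
  calc ∫⁻ x in Set.Ioo (0:ℝ) (2*π), ENNReal.ofReal (|a x| ^ p)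
      ≤ ∫⁻ x in Set.Ioo (0:ℝ) (2*π),
          ENNReal.ofReal (2 ^ p) * (ENNReal.ofReal (|v x| ^ p) + ENNReal.ofReal (|w x| ^ p)) :=
        lintegral_mono fun x => key x
    _ = ENNReal.ofReal (2 ^ p) * ((∫⁻ x in Set.Ioo (0:ℝ) (2*π), ENNReal.ofReal (|v x| ^ p)) +
          ∫⁻ x in Set.Ioo (0:ℝ) (2*π), ENNReal.ofReal (|w x| ^ p)) := by
        rw [lintegral_const_mul' _ _ ENNReal.ofReal_ne_top,
          lintegral_add_left ((hv.abs.pow_const p).ennreal_ofReal) _]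
    _ < ⊤ := ENNReal.mul_lt_top ENNReal.ofReal_lt_top (ENNReal.add_lt_top.2 ⟨hvLp, hwLp⟩)

lemma countable_level {F f : ℝ → ℝ} (hder : ∀ x, HasDerivAt F (f x) x) :
    Set.Countable {x : ℝ | F x = 0 ∧ f x ≠ 0} := by
  set D := {x : ℝ | F x = 0 ∧ f x ≠ 0} with hD
  have key : ∀ x ∈ D, ∃ n : ℕ, ∀ y, F y = 0 → |y - x| < 1/(n+1 : ℝ) → y = x := by
    intro x hx
    have h1 : Tendsto (slope F x) (nhdsWithin x {x}ᶜ) (nhds (f x)) :=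
      hasDerivAt_iff_tendsto_slope.1 (hder x)
    have h2 : ∀ᶠ y in nhdsWithin x {x}ᶜ, slope F x y ≠ 0 := h1.eventually_ne hx.2
    rw [eventually_nhdsWithin_iff] at h2
    obtain ⟨δ, hδ, hball⟩ := Metric.eventually_nhds_iff.1 h2
    obtain ⟨n, hn⟩ := exists_nat_one_div_lt hδ
    refine ⟨n, fun y hy hlt => ?_⟩
    by_contra hne
    have hyx : y ∈ ({x}ᶜ : Set ℝ) := by simpa using hne
    have hd : dist y x < δ := lt_trans (by rwa [Real.dist_eq]) hn
    have := hball hd hyx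
    apply this
    rw [slope_def_field, hy, hx.1]
    simp
  have hsub : D ⊆ ⋃ n : ℕ, {x : ℝ | F x = 0 ∧ ∀ y, F y = 0 → |y - x| < 1/(n+1 : ℝ) → y = x} := by
    intro x hx
    obtain ⟨n, hn⟩ := key x hx
    exact Set.mem_iUnion.2 ⟨n, hx.1, hn⟩
  refine Set.Countable.mono hsub (Set.countable_iUnion fun n => ?_)
  apply Set.countable_of_injective_of_countable_image
    (f := fun x : ℝ => ⌊(n+1 : ℝ) * x⌋) ?_ (Set.to_countable _)
  intro x hx y hy hxy
  have h1 : |(n+1:ℝ) * x - (n+1) * y| < 1 := Int.abs_sub_lt_one_of_floor_eq_floor hxy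
  have hn1 : (0:ℝ) < n + 1 := by positivity
  have h2 : |x - y| < 1/(n+1:ℝ) := by
    rw [← mul_sub, abs_mul, abs_of_pos hn1] at h1
    rw [lt_div_iff₀ hn1]
    linarith [h1]
  exact hy.2 x hx.1 h2

lemma gagliardo_finite {p ε C : ℝ} (hp : 1 ≤ p) (hε : 0 < ε) (hε1 : ε < 1) (hC : 0 ≤ C)
    (v w φ ψ a : ℝ → ℝ) (hv : Measurable v) (hw : Measurable w)
    (ha : ∀ x, a x = v x * φ x + w x * ψ x)
    (hφb : ∀ x ∈ Set.Ioo (0:ℝ) (2*π), |φ x| ≤ C)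
    (hψb : ∀ x ∈ Set.Ioo (0:ℝ) (2*π), |ψ x| ≤ C)
    (hφl : ∀ x ∈ Set.Ioo (0:ℝ) (2*π), ∀ y ∈ Set.Ioo (0:ℝ) (2*π), |φ y - φ x| ≤ C * |y - x|)
    (hψl : ∀ x ∈ Set.Ioo (0:ℝ) (2*π), ∀ y ∈ Set.Ioo (0:ℝ) (2*π), |ψ y - ψ x| ≤ C * |y - x|)
    (hvLp : ∫⁻ x in Set.Ioo (0:ℝ) (2*π), ENNReal.ofReal (|v x| ^ p) < ⊤)
    (hwLp : ∫⁻ x in Set.Ioo (0:ℝ) (2*π), ENNReal.ofReal (|w x| ^ p) < ⊤)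
    (hvG : ∫⁻ x in Set.Ioo (0:ℝ) (2*π), ∫⁻ y in Set.Ioo (0:ℝ) (2*π),
        ENNReal.ofReal (|v y - v x| ^ p / |y - x| ^ (1 + p * ε)) < ⊤)
    (hwG : ∫⁻ x in Set.Ioo (0:ℝ) (2*π), ∫⁻ y in Set.Ioo (0:ℝ) (2*π),
        ENNReal.ofReal (|w y - w x| ^ p / |y - x| ^ (1 + p * ε)) < ⊤) :
    ∫⁻ x in Set.Ioo (0:ℝ) (2*π), ∫⁻ y in Set.Ioo (0:ℝ) (2*π),
        ENNReal.ofReal (|a y - a x| ^ p / |y - x| ^ (1 + p * ε)) < ⊤ := by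
  have hp0 : 0 < p := lt_of_lt_of_le one_pos hp
  set s : ℝ := p - 1 - p * ε with hs_def
  have hs : -1 < s := by nlinarith
  set c : ENNReal := ENNReal.ofReal ((4 * C) ^ p) with hc
  set K : ENNReal := 2 * ∫⁻ t in Set.Ioo (0:ℝ) (2*π), ENNReal.ofReal (t ^ s) with hK_def
  have hK : K < ⊤ := by
    rw [hK_def]
    exact ENNReal.mul_lt_top (by norm_num) (K0_lt_top hs)
  -- pointwise bound
  have key : ∀ x ∈ Set.Ioo (0:ℝ) (2*π), ∀ y ∈ Set.Ioo (0:ℝ) (2*π),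
      ENNReal.ofReal (|a y - a x| ^ p / |y - x| ^ (1 + p * ε)) ≤
      c * (ENNReal.ofReal (|v y - v x| ^ p / |y - x| ^ (1 + p * ε))
        + ENNReal.ofReal (|w y - w x| ^ p / |y - x| ^ (1 + p * ε))
        + ENNReal.ofReal (|v x| ^ p) * ENNReal.ofReal (|y - x| ^ s)
        + ENNReal.ofReal (|w x| ^ p) * ENNReal.ofReal (|y - x| ^ s)) := by
    intro x hx y hy
    by_cases hxy : y = x
    · subst hxy
      simp [Real.zero_rpow hp0.ne']
    · have habs : 0 < |y - x| := abs_pos.2 (sub_ne_zero.2 hxy)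
      have hD0 : 0 < |y - x| ^ (1 + p * ε) := Real.rpow_pos_of_pos habs _
      have h1 : |a y - a x| ≤
          C * (|v y - v x| + |w y - w x| + |v x| * |y - x| + |w x| * |y - x|) := by
        have e : a y - a x
            = (v y - v x) * φ y + v x * (φ y - φ x) + ((w y - w x) * ψ y + w x * (ψ y - ψ x)) := by
          rw [ha, ha]; ring
        rw [e]
        have b1 : |(v y - v x) * φ y| ≤ |v y - v x| * C :=
          (abs_mul _ _).le.trans (mul_le_mul_of_nonneg_left (hφb y hy) (abs_nonneg _))
        have b2 : |v x * (φ y - φ x)| ≤ |v x| * (C * |y - x|) :=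
          (abs_mul _ _).le.trans (mul_le_mul_of_nonneg_left (hφl x hx y hy) (abs_nonneg _))
        have b3 : |(w y - w x) * ψ y| ≤ |w y - w x| * C :=
          (abs_mul _ _).le.trans (mul_le_mul_of_nonneg_left (hψb y hy) (abs_nonneg _))
        have b4 : |w x * (ψ y - ψ x)| ≤ |w x| * (C * |y - x|) :=
          (abs_mul _ _).le.trans (mul_le_mul_of_nonneg_left (hψl x hx y hy) (abs_nonneg _))
        calc |(v y - v x) * φ y + v x * (φ y - φ x) + ((w y - w x) * ψ y + w x * (ψ y - ψ x))|
            ≤ |(v y - v x) * φ y + v x * (φ y - φ x)| + |(w y - w x) * ψ y + w x * (ψ y - ψ x)| :=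
              abs_add_le _ _
          _ ≤ (|(v y - v x) * φ y| + |v x * (φ y - φ x)|) +
              (|(w y - w x) * ψ y| + |w x * (ψ y - ψ x)|) :=
              add_le_add (abs_add_le _ _) (abs_add_le _ _)
          _ ≤ C * (|v y - v x| + |w y - w x| + |v x| * |y - x| + |w x| * |y - x|) := by
              nlinarith [b1, b2, b3, b4]
      have hT0 : (0:ℝ) ≤ |v y - v x| + |w y - w x| + |v x| * |y - x| + |w x| * |y - x| := by
        positivity
      have h2 : |a y - a x| ^ p ≤ (4 * C) ^ p *
          (|v y - v x| ^ p + |w y - w x| ^ p + (|v x| * |y - x|) ^ p + (|w x| * |y - x|) ^ p) := by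
        calc |a y - a x| ^ p
            ≤ (C * (|v y - v x| + |w y - w x| + |v x| * |y - x| + |w x| * |y - x|)) ^ p :=
              Real.rpow_le_rpow (abs_nonneg _) h1 hp0.le
          _ = C ^ p * (|v y - v x| + |w y - w x| + |v x| * |y - x| + |w x| * |y - x|) ^ p :=
              Real.mul_rpow hC hT0
          _ ≤ C ^ p * (4 ^ p * (|v y - v x| ^ p + |w y - w x| ^ p + (|v x| * |y - x|) ^ p +
              (|w x| * |y - x|) ^ p)) := by
              refine mul_le_mul_of_nonneg_left ?_ (Real.rpow_nonneg hC p)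
              exact four_rpow_bound hp0.le (abs_nonneg _) (abs_nonneg _) (by positivity)
                (by positivity)
          _ = (4 * C) ^ p * (|v y - v x| ^ p + |w y - w x| ^ p + (|v x| * |y - x|) ^ p +
              (|w x| * |y - x|) ^ p) := by
              rw [Real.mul_rpow (by norm_num) hC]; ring
      have e2 : ∀ r : ℝ, 0 ≤ r → (r * |y - x|) ^ p / |y - x| ^ (1 + p * ε) =
          r ^ p * |y - x| ^ s := by
        intro r hr
        rw [Real.mul_rpow hr (abs_nonneg _), mul_div_assoc, ← Real.rpow_sub habs]
        congr 2
        rw [hs_def]; ring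
      have h3 : |a y - a x| ^ p / |y - x| ^ (1 + p * ε) ≤ (4 * C) ^ p *
          (|v y - v x| ^ p / |y - x| ^ (1 + p * ε) + |w y - w x| ^ p / |y - x| ^ (1 + p * ε)
            + |v x| ^ p * |y - x| ^ s + |w x| ^ p * |y - x| ^ s) := by
        calc |a y - a x| ^ p / |y - x| ^ (1 + p * ε)
            ≤ ((4 * C) ^ p * (|v y - v x| ^ p + |w y - w x| ^ p + (|v x| * |y - x|) ^ p +
                (|w x| * |y - x|) ^ p)) / |y - x| ^ (1 + p * ε) := by gcongr
          _ = (4 * C) ^ p *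
              (|v y - v x| ^ p / |y - x| ^ (1 + p * ε) + |w y - w x| ^ p / |y - x| ^ (1 + p * ε)
                + |v x| ^ p * |y - x| ^ s + |w x| ^ p * |y - x| ^ s) := by
              rw [mul_div_assoc, add_div, add_div, add_div,
                e2 _ (abs_nonneg (v x)), e2 _ (abs_nonneg (w x))]
      calc ENNReal.ofReal (|a y - a x| ^ p / |y - x| ^ (1 + p * ε))
          ≤ ENNReal.ofReal ((4 * C) ^ p *
              (|v y - v x| ^ p / |y - x| ^ (1 + p * ε) + |w y - w x| ^ p / |y - x| ^ (1 + p * ε)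
                + |v x| ^ p * |y - x| ^ s + |w x| ^ p * |y - x| ^ s)) :=
            ENNReal.ofReal_le_ofReal h3
        _ = c * (ENNReal.ofReal (|v y - v x| ^ p / |y - x| ^ (1 + p * ε))
            + ENNReal.ofReal (|w y - w x| ^ p / |y - x| ^ (1 + p * ε))
            + ENNReal.ofReal (|v x| ^ p) * ENNReal.ofReal (|y - x| ^ s)
            + ENNReal.ofReal (|w x| ^ p) * ENNReal.ofReal (|y - x| ^ s)) := by
            rw [ENNReal.ofReal_mul (by positivity), hc,
              ENNReal.ofReal_add (by positivity) (by positivity),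
              ENNReal.ofReal_add (by positivity) (by positivity),
              ENNReal.ofReal_add (by positivity) (by positivity),
              ENNReal.ofReal_mul (by positivity), ENNReal.ofReal_mul (by positivity)]
  -- measurability
  have m_qv : ∀ x : ℝ, Measurable fun y =>
      ENNReal.ofReal (|v y - v x| ^ p / |y - x| ^ (1 + p * ε)) := fun x =>
    (((hv.sub measurable_const).abs.pow_const p).div
      ((measurable_id.sub_const x).abs.pow_const _)).ennreal_ofReal
  have m_qw : ∀ x : ℝ, Measurable fun y =>
      ENNReal.ofReal (|w y - w x| ^ p / |y - x| ^ (1 + p * ε)) := fun x =>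
    (((hw.sub measurable_const).abs.pow_const p).div
      ((measurable_id.sub_const x).abs.pow_const _)).ennreal_ofReal
  have m_r : ∀ x : ℝ, Measurable fun y => ENNReal.ofReal (|y - x| ^ s) := fun x =>
    ((measurable_id.sub_const x).abs.pow_const s).ennreal_ofReal
  have m_Qv : Measurable fun x => ∫⁻ y in Set.Ioo (0:ℝ) (2*π),
      ENNReal.ofReal (|v y - v x| ^ p / |y - x| ^ (1 + p * ε)) := by
    apply Measurable.lintegral_prod_right
    exact (((hv.comp measurable_snd).sub (hv.comp measurable_fst)).abs.pow_const p).div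
      ((measurable_snd.sub measurable_fst).abs.pow_const _) |>.ennreal_ofReal
  have m_Qw : Measurable fun x => ∫⁻ y in Set.Ioo (0:ℝ) (2*π),
      ENNReal.ofReal (|w y - w x| ^ p / |y - x| ^ (1 + p * ε)) := by
    apply Measurable.lintegral_prod_right
    exact (((hw.comp measurable_snd).sub (hw.comp measurable_fst)).abs.pow_const p).div
      ((measurable_snd.sub measurable_fst).abs.pow_const _) |>.ennreal_ofReal
  have m_Pv : Measurable fun x => ENNReal.ofReal (|v x| ^ p) :=
    (hv.abs.pow_const p).ennreal_ofReal
  have m_Pw : Measurable fun x => ENNReal.ofReal (|w x| ^ p) :=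
    (hw.abs.pow_const p).ennreal_ofReal
  -- inner integral bound
  have inner : ∀ x ∈ Set.Ioo (0:ℝ) (2*π),
      ∫⁻ y in Set.Ioo (0:ℝ) (2*π), ENNReal.ofReal (|a y - a x| ^ p / |y - x| ^ (1 + p * ε)) ≤
      c * ((∫⁻ y in Set.Ioo (0:ℝ) (2*π),
            ENNReal.ofReal (|v y - v x| ^ p / |y - x| ^ (1 + p * ε)))
        + (∫⁻ y in Set.Ioo (0:ℝ) (2*π),
            ENNReal.ofReal (|w y - w x| ^ p / |y - x| ^ (1 + p * ε)))
        + ENNReal.ofReal (|v x| ^ p) * K + ENNReal.ofReal (|w x| ^ p) * K) := by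
    intro x hx
    calc ∫⁻ y in Set.Ioo (0:ℝ) (2*π), ENNReal.ofReal (|a y - a x| ^ p / |y - x| ^ (1 + p * ε))
        ≤ ∫⁻ y in Set.Ioo (0:ℝ) (2*π),
            c * (ENNReal.ofReal (|v y - v x| ^ p / |y - x| ^ (1 + p * ε))
              + ENNReal.ofReal (|w y - w x| ^ p / |y - x| ^ (1 + p * ε))
              + ENNReal.ofReal (|v x| ^ p) * ENNReal.ofReal (|y - x| ^ s)
              + ENNReal.ofReal (|w x| ^ p) * ENNReal.ofReal (|y - x| ^ s)) :=
          setLIntegral_mono' measurableSet_Ioo (fun y hy => key x hx y hy)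
      _ = c * ((∫⁻ y in Set.Ioo (0:ℝ) (2*π),
              ENNReal.ofReal (|v y - v x| ^ p / |y - x| ^ (1 + p * ε)))
          + (∫⁻ y in Set.Ioo (0:ℝ) (2*π),
              ENNReal.ofReal (|w y - w x| ^ p / |y - x| ^ (1 + p * ε)))
          + ENNReal.ofReal (|v x| ^ p) * (∫⁻ y in Set.Ioo (0:ℝ) (2*π),
              ENNReal.ofReal (|y - x| ^ s))
          + ENNReal.ofReal (|w x| ^ p) * (∫⁻ y in Set.Ioo (0:ℝ) (2*π),
              ENNReal.ofReal (|y - x| ^ s))) := by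
          erw [lintegral_const_mul' _ _ ENNReal.ofReal_ne_top,
            lintegral_add_left (((m_qv x).add (m_qw x)).add ((m_r x).const_mul _)),
            lintegral_add_left ((m_qv x).add (m_qw x)),
            lintegral_add_left (m_qv x),
            lintegral_const_mul' _ _ ENNReal.ofReal_ne_top,
            lintegral_const_mul' _ _ ENNReal.ofReal_ne_top]
      _ ≤ c * ((∫⁻ y in Set.Ioo (0:ℝ) (2*π),
              ENNReal.ofReal (|v y - v x| ^ p / |y - x| ^ (1 + p * ε)))
          + (∫⁻ y in Set.Ioo (0:ℝ) (2*π),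
              ENNReal.ofReal (|w y - w x| ^ p / |y - x| ^ (1 + p * ε)))
          + ENNReal.ofReal (|v x| ^ p) * K + ENNReal.ofReal (|w x| ^ p) * K) := by
          gcongr <;> exact slice_bound hx
  calc ∫⁻ x in Set.Ioo (0:ℝ) (2*π), ∫⁻ y in Set.Ioo (0:ℝ) (2*π),
          ENNReal.ofReal (|a y - a x| ^ p / |y - x| ^ (1 + p * ε))
      ≤ ∫⁻ x in Set.Ioo (0:ℝ) (2*π),
          c * ((∫⁻ y in Set.Ioo (0:ℝ) (2*π),
              ENNReal.ofReal (|v y - v x| ^ p / |y - x| ^ (1 + p * ε)))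
            + (∫⁻ y in Set.Ioo (0:ℝ) (2*π),
              ENNReal.ofReal (|w y - w x| ^ p / |y - x| ^ (1 + p * ε)))
            + ENNReal.ofReal (|v x| ^ p) * K + ENNReal.ofReal (|w x| ^ p) * K) :=
        setLIntegral_mono' measurableSet_Ioo inner
    _ = c * ((∫⁻ x in Set.Ioo (0:ℝ) (2*π), ∫⁻ y in Set.Ioo (0:ℝ) (2*π),
            ENNReal.ofReal (|v y - v x| ^ p / |y - x| ^ (1 + p * ε)))
        + (∫⁻ x in Set.Ioo (0:ℝ) (2*π), ∫⁻ y in Set.Ioo (0:ℝ) (2*π),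
            ENNReal.ofReal (|w y - w x| ^ p / |y - x| ^ (1 + p * ε)))
        + (∫⁻ x in Set.Ioo (0:ℝ) (2*π), ENNReal.ofReal (|v x| ^ p)) * K
        + (∫⁻ x in Set.Ioo (0:ℝ) (2*π), ENNReal.ofReal (|w x| ^ p)) * K) := by
        erw [lintegral_const_mul' _ _ ENNReal.ofReal_ne_top,
          lintegral_add_left ((m_Qv.add m_Qw).add (m_Pv.mul_const _)),
          lintegral_add_left (m_Qv.add m_Qw),
          lintegral_add_left m_Qv,
          lintegral_mul_const' _ _ hK.ne,
          lintegral_mul_const' _ _ hK.ne]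
    _ < ⊤ := by
        refine ENNReal.mul_lt_top ENNReal.ofReal_lt_top ?_
        refine ENNReal.add_lt_top.2 ⟨ENNReal.add_lt_top.2 ⟨ENNReal.add_lt_top.2 ⟨hvG, hwG⟩, ?_⟩, ?_⟩
        · exact ENNReal.mul_lt_top hvLp hK
        · exact ENNReal.mul_lt_top hwLp hK

end Stmt13Aux


open Stmt13Aux

/-- If `f` is continuous, `2π`-periodic and has the separation property
(`a f = b` with `a, b ∈ W^{ε,p}(𝕋)` forces `a = b = 0`), `F = 1 + ∫_0^· f` (so `F' = f`),
and `u₁, u₂` are the pullbacks to `𝕋` of the components of a vector field on the boundary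
curve `θ ↦ (F θ cos θ, F θ sin θ)` which lie in `W^{ε,p}(𝕋)` and whose normal component
`n·u` vanishes identically, then `u₁ = u₂ = 0` (a.e.). -/
theorem stmt13 (p ε : ℝ) (hp : 1 ≤ p) (hε : 0 < ε) (hε1 : ε < 1)
    (f F u₁ u₂ : ℝ → ℝ)
    (hfc : Continuous f) (hfper : ∀ x, f (x + 2 * π) = f x)
    (hF : F = fun x => 1 + ∫ t in (0:ℝ)..x, f t)
    (hsep : ∀ a b : ℝ → ℝ, Measurable a → Measurable b →
      (∀ x, a (x + 2 * π) = a x) → (∀ x, b (x + 2 * π) = b x) →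
      (∫⁻ x in Set.Ioo (0:ℝ) (2 * π), ENNReal.ofReal (|a x| ^ p) < ⊤) →
      (∫⁻ x in Set.Ioo (0:ℝ) (2 * π), ∫⁻ y in Set.Ioo (0:ℝ) (2 * π),
          ENNReal.ofReal (|a y - a x| ^ p / |y - x| ^ (1 + p * ε)) < ⊤) →
      (∫⁻ x in Set.Ioo (0:ℝ) (2 * π), ∫⁻ y in Set.Ioo (0:ℝ) (2 * π),
          ENNReal.ofReal (|b y - b x| ^ p / |y - x| ^ (1 + p * ε)) < ⊤) →
      (∀ x, a x * f x = b x) →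
      (∀ᵐ x ∂(volume.restrict (Set.Ioo (0:ℝ) (2 * π))), a x = 0 ∧ b x = 0))
    (hu₁ : Measurable u₁) (hu₂ : Measurable u₂)
    (hu₁per : ∀ x, u₁ (x + 2 * π) = u₁ x) (hu₂per : ∀ x, u₂ (x + 2 * π) = u₂ x)
    (hu₁Lp : ∫⁻ x in Set.Ioo (0:ℝ) (2 * π), ENNReal.ofReal (|u₁ x| ^ p) < ⊤)
    (hu₂Lp : ∫⁻ x in Set.Ioo (0:ℝ) (2 * π), ENNReal.ofReal (|u₂ x| ^ p) < ⊤)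
    (hu₁G : ∫⁻ x in Set.Ioo (0:ℝ) (2 * π), ∫⁻ y in Set.Ioo (0:ℝ) (2 * π),
        ENNReal.ofReal (|u₁ y - u₁ x| ^ p / |y - x| ^ (1 + p * ε)) < ⊤)
    (hu₂G : ∫⁻ x in Set.Ioo (0:ℝ) (2 * π), ∫⁻ y in Set.Ioo (0:ℝ) (2 * π),
        ENNReal.ofReal (|u₂ y - u₂ x| ^ p / |y - x| ^ (1 + p * ε)) < ⊤)
    (hnormal : ∀ θ : ℝ,
      ((F θ) ^ 2 + (f θ) ^ 2) ^ (-(1:ℝ)/2) *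
        ((F θ * Real.cos θ + f θ * Real.sin θ) * u₁ θ +
         (F θ * Real.sin θ - f θ * Real.cos θ) * u₂ θ) = 0) :
    (∀ᵐ θ ∂(volume.restrict (Set.Ioo (0:ℝ) (2 * π))), u₁ θ = 0 ∧ u₂ θ = 0) := by
  classical
  have hπ : 0 < π := Real.pi_pos
  have hp0 : 0 < p := lt_of_lt_of_le one_pos hp
  subst hF
  set F : ℝ → ℝ := fun x => 1 + ∫ t in (0:ℝ)..x, f t with hF
  have hFder : ∀ x, HasDerivAt F (f x) x := by
    intro x
    have h := intervalIntegral.integral_hasDerivAt_right (hfc.intervalIntegrable 0 x)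
      (hfc.stronglyMeasurableAtFilter volume (nhds x)) hfc.continuousAt
    simpa [hF] using h.const_add 1
  have hFc : Continuous F := continuous_iff_continuousAt.2 fun x => (hFder x).continuousAt
  obtain ⟨M₀, hM₀⟩ := isCompact_Icc.exists_bound_of_continuousOn
    (hfc.continuousOn : ContinuousOn f (Set.Icc (0:ℝ) (2*π)))
  set M := max M₀ 0 with hM_def
  have hM0 : 0 ≤ M := le_max_right _ _
  have hM : ∀ x ∈ Set.Icc (0:ℝ) (2*π), |f x| ≤ M := fun x hx =>
    le_trans (by simpa using hM₀ x hx) (le_max_left _ _)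
  have hFdiff : ∀ x ∈ Set.Ioo (0:ℝ) (2*π), ∀ y ∈ Set.Ioo (0:ℝ) (2*π),
      |F y - F x| ≤ M * |y - x| := by
    intro x hx y hy
    have e : F y - F x = ∫ t in x..y, f t := by
      simp only [hF, add_sub_add_left_eq_sub]
      exact intervalIntegral.integral_interval_sub_left (hfc.intervalIntegrable 0 y)
        (hfc.intervalIntegrable 0 x)
    have hsub : Set.uIoc x y ⊆ Set.Icc (0:ℝ) (2*π) := by
      rw [Set.uIoc]
      intro t ht
      exact ⟨le_of_lt (lt_of_le_of_lt (le_min hx.1.le hy.1.le) ht.1),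
        le_of_lt (lt_of_le_of_lt ht.2 (max_lt hx.2 hy.2))⟩
    have hb := intervalIntegral.norm_integral_le_of_norm_le_const
      (C := M) (f := f) (a := x) (b := y) (fun t ht => by
        simpa [Real.norm_eq_abs] using hM t (hsub ht))
    rw [e]
    simpa [Real.norm_eq_abs, abs_sub_comm y x] using hb
  have hFb : ∀ x ∈ Set.Ioo (0:ℝ) (2*π), |F x| ≤ 1 + M * (2*π) := by
    intro x hx
    have hsub : Set.uIoc 0 x ⊆ Set.Icc (0:ℝ) (2*π) := by
      rw [Set.uIoc]
      intro t ht
      refine ⟨le_of_lt (lt_of_le_of_lt (le_min le_rfl hx.1.le) ht.1),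
        le_of_lt (lt_of_le_of_lt ht.2 (max_lt ?_ hx.2))⟩
      positivity
    have hb := intervalIntegral.norm_integral_le_of_norm_le_const
      (C := M) (f := f) (a := 0) (b := x) (fun t ht => by
        simpa [Real.norm_eq_abs] using hM t (hsub ht))
    rw [Real.norm_eq_abs, sub_zero] at hb
    have hxx : |x| ≤ 2*π := by
      rw [abs_of_pos hx.1]; exact hx.2.le
    have h1 : |F x| ≤ 1 + |∫ t in (0:ℝ)..x, f t| := by
      simp only [hF]
      calc |1 + ∫ t in (0:ℝ)..x, f t| ≤ |(1:ℝ)| + |∫ t in (0:ℝ)..x, f t| := abs_add_le _ _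
        _ = 1 + |∫ t in (0:ℝ)..x, f t| := by rw [abs_one]
    nlinarith [abs_nonneg (∫ t in (0:ℝ)..x, f t)]
  -- the key functions
  set g : ℝ → ℝ := fun x => u₁ x * Real.cos x + u₂ x * Real.sin x with hg
  set A : ℝ → ℝ := fun x => u₂ x * Real.cos x - u₁ x * Real.sin x with hA
  set B : ℝ → ℝ := fun x => (u₁ x * Real.cos x + u₂ x * Real.sin x) * F x with hB
  have hgmeas : Measurable g :=
    (hu₁.mul Real.continuous_cos.measurable).add (hu₂.mul Real.continuous_sin.measurable)
  have hAmeas : Measurable A :=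
    (hu₂.mul Real.continuous_cos.measurable).sub (hu₁.mul Real.continuous_sin.measurable)
  have hBmeas : Measurable B := hgmeas.mul hFc.measurable
  have hBg : ∀ x, B x = g x * F x := fun x => by simp only [hB, hg]
  have haf : ∀ θ, A θ * f θ = B θ := by
    intro θ
    have h := hnormal θ
    have hnn : 0 ≤ F θ^2 + f θ^2 := by positivity
    rcases eq_or_lt_of_le hnn with h0 | hpos
    · have hF0 : F θ = 0 := by nlinarith [sq_nonneg (F θ), sq_nonneg (f θ)]
      have hf0 : f θ = 0 := by nlinarith [sq_nonneg (F θ), sq_nonneg (f θ)]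
      simp only [hA, hB]
      rw [hf0, hF0]
      ring
    · have hfac : ((F θ)^2 + (f θ)^2) ^ (-(1:ℝ)/2) ≠ 0 := (Real.rpow_pos_of_pos hpos _).ne'
      have hinner : (F θ * Real.cos θ + f θ * Real.sin θ) * u₁ θ +
          (F θ * Real.sin θ - f θ * Real.cos θ) * u₂ θ = 0 :=
        (mul_eq_zero.1 h).resolve_left hfac
      simp only [hA, hB]
      linear_combination -hinner
  have hgper : ∀ x, g (x + 2*π) = g x := by
    intro x
    simp only [hg]
    rw [Real.cos_add_two_pi, Real.sin_add_two_pi, hu₁per, hu₂per]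
  have hAper : ∀ x, A (x + 2*π) = A x := by
    intro x
    simp only [hA]
    rw [Real.cos_add_two_pi, Real.sin_add_two_pi, hu₁per, hu₂per]
  have hBper : ∀ x, B (x + 2*π) = B x := by
    intro x
    rw [← haf, ← haf, hAper, hfper]
  have habs_bound : ∀ (c d : ℝ → ℝ) (x : ℝ), |c x| ≤ 1 → |d x| ≤ 1 →
      |u₁ x * c x + u₂ x * d x| ≤ |u₁ x| + |u₂ x| := by
    intro c d x hc hd
    calc |u₁ x * c x + u₂ x * d x| ≤ |u₁ x * c x| + |u₂ x * d x| := abs_add_le _ _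
      _ ≤ |u₁ x| + |u₂ x| := by
        rw [abs_mul, abs_mul]
        have := abs_nonneg (u₁ x); have := abs_nonneg (u₂ x)
        nlinarith
  have hALp : ∫⁻ x in Set.Ioo (0:ℝ) (2*π), ENNReal.ofReal (|A x| ^ p) < ⊤ := by
    refine Lp_bound hp0 u₁ u₂ A hu₁ (fun x => ?_) hu₁Lp hu₂Lp
    have h := habs_bound (fun t => -Real.sin t) Real.cos x
      (by rw [abs_neg]; exact Real.abs_sin_le_one x) (Real.abs_cos_le_one x)
    calc |A x| = |u₁ x * (-Real.sin x) + u₂ x * Real.cos x| := by rw [hA]; ring_nf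
      _ ≤ |u₁ x| + |u₂ x| := h
  have hAG : ∫⁻ x in Set.Ioo (0:ℝ) (2*π), ∫⁻ y in Set.Ioo (0:ℝ) (2*π),
      ENNReal.ofReal (|A y - A x| ^ p / |y - x| ^ (1 + p * ε)) < ⊤ := by
    refine gagliardo_finite (C := 1) hp hε hε1 (by norm_num) u₂ u₁ Real.cos
      (fun t => -Real.sin t) A hu₂ hu₁ (fun x => by simp only [hA]; ring)
      (fun x _ => Real.abs_cos_le_one x)
      (fun x _ => by rw [abs_neg]; exact Real.abs_sin_le_one x)
      (fun x _ y _ => by rw [one_mul]; exact lipschitz_cos x y)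
      (fun x _ y _ => ?_) hu₂Lp hu₁Lp hu₂G hu₁G
    rw [one_mul, neg_sub_neg]
    exact (lipschitz_sin y x).trans (le_of_eq (abs_sub_comm x y))
  have hBG : ∫⁻ x in Set.Ioo (0:ℝ) (2*π), ∫⁻ y in Set.Ioo (0:ℝ) (2*π),
      ENNReal.ofReal (|B y - B x| ^ p / |y - x| ^ (1 + p * ε)) < ⊤ := by
    have φb : ∀ x ∈ Set.Ioo (0:ℝ) (2*π), |Real.cos x * F x| ≤ 1 + M*(2*π) + M := by
      intro x hx
      rw [abs_mul]
      have h1 := mul_le_of_le_one_left (abs_nonneg (F x)) (Real.abs_cos_le_one x)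
      linarith [hFb x hx]
    have ψb : ∀ x ∈ Set.Ioo (0:ℝ) (2*π), |Real.sin x * F x| ≤ 1 + M*(2*π) + M := by
      intro x hx
      rw [abs_mul]
      have h1 := mul_le_of_le_one_left (abs_nonneg (F x)) (Real.abs_sin_le_one x)
      linarith [hFb x hx]
    have φl : ∀ x ∈ Set.Ioo (0:ℝ) (2*π), ∀ y ∈ Set.Ioo (0:ℝ) (2*π),
        |Real.cos y * F y - Real.cos x * F x| ≤ (1 + M*(2*π) + M) * |y - x| := by
      intro x hx y hy
      have e : Real.cos y * F y - Real.cos x * F x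
          = Real.cos y * (F y - F x) + (Real.cos y - Real.cos x) * F x := by ring
      rw [e]
      have b1 : |Real.cos y * (F y - F x)| ≤ M * |y - x| := by
        rw [abs_mul]
        have h1 := mul_le_of_le_one_left (abs_nonneg (F y - F x)) (Real.abs_cos_le_one y)
        linarith [hFdiff x hx y hy]
      have b2 : |(Real.cos y - Real.cos x) * F x| ≤ |y - x| * (1 + M*(2*π)) := by
        rw [abs_mul]
        exact mul_le_mul (lipschitz_cos x y) (hFb x hx) (abs_nonneg _) (abs_nonneg _)
      calc |Real.cos y * (F y - F x) + (Real.cos y - Real.cos x) * F x|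
          ≤ |Real.cos y * (F y - F x)| + |(Real.cos y - Real.cos x) * F x| := abs_add_le _ _
        _ ≤ (1 + M*(2*π) + M) * |y - x| := by nlinarith [abs_nonneg (y - x)]
    have ψl : ∀ x ∈ Set.Ioo (0:ℝ) (2*π), ∀ y ∈ Set.Ioo (0:ℝ) (2*π),
        |Real.sin y * F y - Real.sin x * F x| ≤ (1 + M*(2*π) + M) * |y - x| := by
      intro x hx y hy
      have e : Real.sin y * F y - Real.sin x * F x
          = Real.sin y * (F y - F x) + (Real.sin y - Real.sin x) * F x := by ring
      rw [e]
      have b1 : |Real.sin y * (F y - F x)| ≤ M * |y - x| := by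
        rw [abs_mul]
        have h1 := mul_le_of_le_one_left (abs_nonneg (F y - F x)) (Real.abs_sin_le_one y)
        linarith [hFdiff x hx y hy]
      have b2 : |(Real.sin y - Real.sin x) * F x| ≤ |y - x| * (1 + M*(2*π)) := by
        rw [abs_mul]
        exact mul_le_mul (lipschitz_sin x y) (hFb x hx) (abs_nonneg _) (abs_nonneg _)
      calc |Real.sin y * (F y - F x) + (Real.sin y - Real.sin x) * F x|
          ≤ |Real.sin y * (F y - F x)| + |(Real.sin y - Real.sin x) * F x| := abs_add_le _ _
        _ ≤ (1 + M*(2*π) + M) * |y - x| := by nlinarith [abs_nonneg (y - x)]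
    exact gagliardo_finite (C := 1 + M*(2*π) + M) hp hε hε1 (by positivity) u₁ u₂
      (fun t => Real.cos t * F t) (fun t => Real.sin t * F t) B hu₁ hu₂
      (fun x => by simp only [hB]; ring) φb ψb φl ψl hu₁Lp hu₂Lp hu₁G hu₂G
  -- first application of the separation property
  have h1 := hsep A B hAmeas hBmeas hAper hBper hALp hAG hBG haf
  -- the periodization map and the cut-off function a₂
  set wr : ℝ → ℝ := fun x => x - 2*π * ⌊x / (2*π)⌋ with hwr
  have hwrper : ∀ x, wr (x + 2*π) = wr x := by
    intro x
    simp only [hwr]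
    have e1 : (x + 2*π)/(2*π) = x/(2*π) + 1 := by field_simp
    rw [e1, Int.floor_add_one]
    push_cast
    ring
  have hwrid : ∀ x ∈ Set.Ioo (0:ℝ) (2*π), wr x = x := by
    intro x hx
    simp only [hwr]
    have h0 : ⌊x/(2*π)⌋ = 0 := by
      rw [Int.floor_eq_zero_iff]
      refine Set.mem_Ico.mpr ⟨div_nonneg hx.1.le (by positivity), ?_⟩
      rw [div_lt_one (by positivity)]; exact hx.2
    rw [h0]
    simp
  set a₂ : ℝ → ℝ := fun x => if F (wr x) = 0 ∧ f x = 0 then g x else 0 with ha₂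
  have hwrmeas : Measurable wr := by
    apply measurable_id.sub
    exact (measurable_from_top.comp (Int.measurable_floor.comp
      (measurable_id.div_const (2*π)))).const_mul (2*π)
  have hcondmeas : MeasurableSet {x : ℝ | F (wr x) = 0 ∧ f x = 0} :=
    (measurableSet_eq_fun (hFc.measurable.comp hwrmeas) measurable_const).inter
      (measurableSet_eq_fun hfc.measurable measurable_const)
  have ha₂meas : Measurable a₂ := Measurable.ite hcondmeas hgmeas measurable_const
  have ha₂per : ∀ x, a₂ (x + 2*π) = a₂ x := by
    intro x
    simp only [ha₂, hwrper, hfper, hgper]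
  have ha₂f : ∀ x, a₂ x * f x = (fun _ => (0:ℝ)) x := by
    intro x
    by_cases h : F (wr x) = 0 ∧ f x = 0
    · simp only [ha₂, if_pos h, h.2, mul_zero]
    · simp only [ha₂, if_neg h, zero_mul]
  have hgLp_bound : ∀ x, |g x| ≤ |u₁ x| + |u₂ x| := fun x =>
    habs_bound Real.cos Real.sin x (Real.abs_cos_le_one x) (Real.abs_sin_le_one x)
  have ha₂Lp : ∫⁻ x in Set.Ioo (0:ℝ) (2*π), ENNReal.ofReal (|a₂ x| ^ p) < ⊤ := by
    refine Lp_bound hp0 u₁ u₂ a₂ hu₁ (fun x => ?_) hu₁Lp hu₂Lp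
    by_cases h : F (wr x) = 0 ∧ f x = 0
    · simp only [ha₂, if_pos h]
      exact hgLp_bound x
    · simp only [ha₂, if_neg h, abs_zero]
      positivity
  -- a₂ agrees a.e. with g on (0, 2π)
  have hBnull : volume ({x : ℝ | ¬ B x = 0} ∩ Set.Ioo (0:ℝ) (2*π)) = 0 := by
    have h1' : ∀ᵐ x ∂(volume.restrict (Set.Ioo (0:ℝ) (2*π))), B x = 0 :=
      h1.mono fun x hx => hx.2
    have hs : MeasurableSet {x : ℝ | ¬ B x = 0} := by
      simpa [Set.compl_setOf] using (measurableSet_eq_fun hBmeas measurable_const).compl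
    rw [ae_iff, Measure.restrict_apply hs] at h1'
    exact h1'
  have hDnull : volume {x : ℝ | F x = 0 ∧ f x ≠ 0} = 0 :=
    (countable_level hFder).measure_zero _
  have ha₂g : ∀ᵐ x ∂(volume.restrict (Set.Ioo (0:ℝ) (2*π))), a₂ x = g x := by
    have hs : MeasurableSet {x : ℝ | ¬ a₂ x = g x} := by
      simpa [Set.compl_setOf] using (measurableSet_eq_fun ha₂meas hgmeas).compl
    rw [ae_iff, Measure.restrict_apply hs]
    refine measure_mono_null ?_
      (measure_union_null hBnull hDnull)
    intro x hx
    obtain ⟨hxne, hxS⟩ := hx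
    simp only [Set.mem_compl_iff, Set.mem_setOf_eq] at hxne
    by_cases hcondx : F (wr x) = 0 ∧ f x = 0
    · exfalso
      apply hxne
      simp only [ha₂, if_pos hcondx]
    · have hg0 : g x ≠ 0 := by
        intro h0
        apply hxne
        simp only [ha₂, if_neg hcondx, h0]
      rw [hwrid x hxS] at hcondx
      by_cases hFx : F x = 0
      · right
        exact ⟨hFx, fun hfx => hcondx ⟨hFx, hfx⟩⟩
      · left
        refine ⟨?_, hxS⟩
        simp only [Set.mem_setOf_eq, hBg]
        exact mul_ne_zero hg0 hFx
  have hgG : ∫⁻ x in Set.Ioo (0:ℝ) (2*π), ∫⁻ y in Set.Ioo (0:ℝ) (2*π),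
      ENNReal.ofReal (|g y - g x| ^ p / |y - x| ^ (1 + p * ε)) < ⊤ :=
    gagliardo_finite (C := 1) hp hε hε1 (by norm_num) u₁ u₂ Real.cos Real.sin g hu₁ hu₂
      (fun x => by simp only [hg])
      (fun x _ => Real.abs_cos_le_one x)
      (fun x _ => Real.abs_sin_le_one x)
      (fun x _ y _ => by rw [one_mul]; exact lipschitz_cos x y)
      (fun x _ y _ => by rw [one_mul]; exact lipschitz_sin x y)
      hu₁Lp hu₂Lp hu₁G hu₂G
  have ha₂G : ∫⁻ x in Set.Ioo (0:ℝ) (2*π), ∫⁻ y in Set.Ioo (0:ℝ) (2*π),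
      ENNReal.ofReal (|a₂ y - a₂ x| ^ p / |y - x| ^ (1 + p * ε)) < ⊤ := by
    have he : (fun x => ∫⁻ y in Set.Ioo (0:ℝ) (2*π),
        ENNReal.ofReal (|a₂ y - a₂ x| ^ p / |y - x| ^ (1 + p * ε)))
        =ᵐ[volume.restrict (Set.Ioo (0:ℝ) (2*π))]
        (fun x => ∫⁻ y in Set.Ioo (0:ℝ) (2*π),
        ENNReal.ofReal (|g y - g x| ^ p / |y - x| ^ (1 + p * ε))) := by
      filter_upwards [ha₂g] with x hx
      refine lintegral_congr_ae ?_
      filter_upwards [ha₂g] with y hy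
      rw [hx, hy]
    rw [lintegral_congr_ae he]
    exact hgG
  have hb₂G : ∫⁻ x in Set.Ioo (0:ℝ) (2*π), ∫⁻ y in Set.Ioo (0:ℝ) (2*π),
      ENNReal.ofReal (|(fun _ => (0:ℝ)) y - (fun _ => (0:ℝ)) x| ^ p
        / |y - x| ^ (1 + p * ε)) < ⊤ := by
    simp [Real.zero_rpow hp0.ne']
  have h2 := hsep a₂ (fun _ => 0) ha₂meas measurable_const ha₂per (fun _ => rfl)
    ha₂Lp ha₂G hb₂G ha₂f
  -- conclusion
  filter_upwards [h1, h2, ha₂g] with x hx1 hx2 hxg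
  have hax : u₂ x * Real.cos x - u₁ x * Real.sin x = 0 := hx1.1
  have hgx : u₁ x * Real.cos x + u₂ x * Real.sin x = 0 := by
    have h := hx2.1
    rw [hxg] at h
    exact h
  constructor
  · linear_combination Real.cos x * hgx - Real.sin x * hax - u₁ x * (Real.sin_sq_add_cos_sq x)
  · linear_combination Real.sin x * hgx + Real.cos x * hax - u₂ x * (Real.sin_sq_add_cos_sq x)
end

section
/- Let s_m satisfy s₂ < 1/(q−1) and the recursion s_{m+1} = (s_m + 1)·q·2^{(1−q)q^m} for m ≥ 2, with integer q ≥ 7. Then s_m < 1/(q−1) for all m ≥ 2. -/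
lemma nat_pow_bound : ∀ n : ℕ, 7 ≤ n → 2 * n ^ 2 ≤ 2 ^ n := by
  intro n hn
  induction n with
  | zero => omega
  | succ k ih =>
    rcases Nat.lt_or_ge k 7 with h | h
    · have hk6 : k = 6 := by omega
      subst hk6; norm_num
    · have := ih h
      have hk : 7 ≤ k := h
      have : 2 * (k + 1) ^ 2 ≤ 2 * (2 * k ^ 2) := by nlinarith
      calc 2 * (k + 1) ^ 2 ≤ 2 * (2 * k ^ 2) := this
        _ ≤ 2 * 2 ^ k := by omega
        _ = 2 ^ (k + 1) := by ring

/-- If `s 2 < 1/(q−1)` and `s (m+1) = (s m + 1) · q · 2^{(1−q)q^m}` for `m ≥ 2`, with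
integer `q ≥ 7`, then `s m < 1/(q−1)` for all `m ≥ 2`. -/
theorem stmt19 (q : ℕ) (hq : 7 ≤ q) (s : ℕ → ℝ)
    (h2 : s 2 < 1 / ((q : ℝ) - 1))
    (hrec : ∀ m : ℕ, 2 ≤ m →
      s (m + 1) = (s m + 1) * q * (2 : ℝ) ^ ((1 - (q : ℝ)) * (q : ℝ) ^ m)) :
    ∀ m : ℕ, 2 ≤ m → s m < 1 / ((q : ℝ) - 1) := by
  have hq7 : (7 : ℝ) ≤ (q : ℝ) := by exact_mod_cast hq
  have hq1 : (0 : ℝ) < (q : ℝ) - 1 := by linarith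
  have hinv : (0 : ℝ) < 1 / ((q : ℝ) - 1) := by positivity
  -- key: q^2 * 2^(1-q) ≤ 1
  have hkey : (q : ℝ) ^ 2 * (2 : ℝ) ^ ((1 : ℝ) - (q : ℝ)) ≤ 1 := by
    have hnat := nat_pow_bound q hq
    have hnatR : 2 * (q : ℝ) ^ 2 ≤ (2 : ℝ) ^ q := by exact_mod_cast hnat
    have hr : (2 : ℝ) ^ ((1 : ℝ) - (q : ℝ)) = 2 / (2 : ℝ) ^ q := by
      rw [Real.rpow_sub (by norm_num), Real.rpow_one, Real.rpow_natCast]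
    have h2q : (0:ℝ) < (2:ℝ) ^ q := by positivity
    rw [hr, mul_div_assoc', div_le_one h2q]
    linarith
  intro m hm
  induction m with
  | zero => omega
  | succ n ih =>
    rcases Nat.lt_or_ge n 2 with h | h
    · interval_cases n
      · omega
      · exact h2
    · have ihn := ih h
      rw [hrec n h]
      set A := (2 : ℝ) ^ ((1 - (q : ℝ)) * (q : ℝ) ^ n) with hA
      have hApos : 0 < A := Real.rpow_pos_of_pos (by norm_num) _
      have hAle : A ≤ (2 : ℝ) ^ ((1 : ℝ) - (q : ℝ)) := by
        apply Real.rpow_le_rpow_of_exponent_le (by norm_num)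
        have h1 : (1 : ℝ) ≤ (q : ℝ) ^ n := one_le_pow₀ (by linarith)
        nlinarith
      rcases le_or_gt (s n + 1) 0 with hs | hs
      · have : (s n + 1) * q * A ≤ 0 := by
          apply mul_nonpos_of_nonpos_of_nonneg _ hApos.le
          exact mul_nonpos_of_nonpos_of_nonneg hs (by positivity)
        linarith
      · have hqA : 0 < (q : ℝ) * A := by positivity
        have step1 : (s n + 1) * q * A < (1 / ((q : ℝ) - 1) + 1) * ((q : ℝ) * A) := by
          rw [mul_assoc]
          exact mul_lt_mul_of_pos_right (by linarith) hqA
        have hE : (0 : ℝ) < (2 : ℝ) ^ ((1 : ℝ) - (q : ℝ)) := Real.rpow_pos_of_pos (by norm_num) _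
        have step2 : (1 / ((q : ℝ) - 1) + 1) * ((q : ℝ) * A)
            ≤ (1 / ((q : ℝ) - 1) + 1) * ((q : ℝ) * (2 : ℝ) ^ ((1 : ℝ) - (q : ℝ))) := by
          apply mul_le_mul_of_nonneg_left _ (by positivity)
          exact mul_le_mul_of_nonneg_left hAle (by positivity)
        have step3 : (1 / ((q : ℝ) - 1) + 1) * ((q : ℝ) * (2 : ℝ) ^ ((1 : ℝ) - (q : ℝ)))
            ≤ 1 / ((q : ℝ) - 1) := by
          have h1 : 1 / ((q : ℝ) - 1) + 1 = (q : ℝ) / ((q : ℝ) - 1) := by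
            field_simp
            ring
          rw [h1, div_mul_eq_mul_div, div_le_div_iff₀ hq1 hq1]
          nlinarith
        linarith
end
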